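/- arXiv:2209.03989 — 9 statements merged into one kernel-verified Lean document; each statement's English description precedes it below -/
import Mathlib

section
/- Let $U$ be an open convex subset of a Banach space $X$ and $f:U\to\mathbb{R}$ be continuous and quasi-concave. Let $x'\in X'\setminus\{0\}$ be a continuous linear functional. If $f$ is Fréchet differentiable at $x^*\in U$ and $Df(x^*)=\lambda x'$ for some $\lambda>0$, then $f(x^*)\ge f(x)$ for every $x\in U$ with $x'(x)=x'(x^*)$. -/
open Set Filter Topology

theorem stmt_0 {X : Type*} [NormedAddCommGroup X] [NormedSpace ℝ X] [CompleteSpace X]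
    (U : Set X) (hU : IsOpen U) (hUc : Convex ℝ U)
    (f : X → ℝ) (hf : ContinuousOn f U)
    (hqc : ∀ x ∈ U, ∀ y ∈ U, ∀ t ∈ Icc (0:ℝ) 1,
      min (f x) (f y) ≤ f ((1 - t) • x + t • y))
    (x' : X →L[ℝ] ℝ) (hx' : x' ≠ 0)
    (xstar : X) (hxstar : xstar ∈ U)
    (lam : ℝ) (hlam : 0 < lam)
    (hdiff : HasFDerivAt f (lam • x') xstar) :
    ∀ x ∈ U, x' x = x' xstar → f x ≤ f xstar := by
  intro x hx hxx
  by_contra hlt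
  push_neg at hlt
  -- pick v with x' v > 0
  obtain ⟨v0, hv0⟩ : ∃ v, x' v ≠ 0 := by
    by_contra h
    push_neg at h
    exact hx' (ContinuousLinearMap.ext fun v => by simp [h v])
  obtain ⟨v, hv⟩ : ∃ v, 0 < x' v := by
    rcases lt_or_gt_of_ne hv0 with h | h
    · exact ⟨-v0, by simpa using h⟩
    · exact ⟨v0, h⟩
  -- continuity at x
  have hcont : ContinuousAt f x := hf.continuousAt (hU.mem_nhds hx)
  have htend : Tendsto (fun ε : ℝ => x - ε • v) (𝓝 0) (𝓝 x) := by
    have : Tendsto (fun ε : ℝ => x - ε • v) (𝓝 0) (𝓝 (x - (0:ℝ) • v)) :=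
      tendsto_const_nhds.sub ((continuous_id.smul continuous_const).tendsto 0)
    simpa using this
  have hmemU : ∀ᶠ ε : ℝ in 𝓝 0, (x - ε • v) ∈ U := htend.eventually (hU.eventually_mem hx)
  have hgt : ∀ᶠ ε : ℝ in 𝓝 0, f xstar < f (x - ε • v) :=
    htend.eventually (hcont (Ioi_mem_nhds hlt))
  obtain ⟨ε, ⟨hyU, hyf⟩, hε⟩ :
      ∃ ε : ℝ, ((x - ε • v) ∈ U ∧ f xstar < f (x - ε • v)) ∧ ε ∈ Ioi (0:ℝ) :=
    ((((hmemU.and hgt).filter_mono (nhdsWithin_le_nhds (s := Ioi 0))).and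
      eventually_mem_nhdsWithin).exists)
  set y : X := x - ε • v with hy
  set d : X := y - xstar with hd
  have hxd : x' d = -(ε * x' v) := by
    simp [hd, hy, map_sub, map_smul, smul_eq_mul, hxx]
  -- quasi-concavity along the segment
  have key : ∀ t ∈ Icc (0:ℝ) 1, f xstar ≤ f (xstar + t • d) := by
    intro t ht
    have h := hqc xstar hxstar y hyU t ht
    have hmin : min (f xstar) (f y) = f xstar := min_eq_left hyf.le
    have hpt : (1 - t) • xstar + t • y = xstar + t • d := by
      simp only [hd]; module
    rw [hmin, hpt] at h
    exact h
  -- derivative along the line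
  have hline : HasDerivAt (fun t : ℝ => xstar + t • d) d 0 := by
    simpa using ((hasDerivAt_id (0:ℝ)).smul_const d).const_add xstar
  have hg : HasDerivAt (fun t : ℝ => f (xstar + t • d)) (lam * x' d) 0 := by
    have hdiff' : HasFDerivAt f (lam • x') ((fun t : ℝ => xstar + t • d) 0) := by
      simpa using hdiff
    have := hdiff'.comp_hasDerivAt 0 hline
    exact this
  have hslope := hasDerivAt_iff_tendsto_slope.mp hg
  have h01 : Ioc (0:ℝ) 1 ∈ 𝓝[>] (0:ℝ) := Ioc_mem_nhdsGT_of_mem ⟨le_refl 0, one_pos⟩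
  have hnn : 0 ≤ lam * x' d := by
    have hmono : 𝓝[>] (0:ℝ) ≤ 𝓝[≠] (0:ℝ) :=
      nhdsWithin_mono 0 fun t ht => ne_of_gt ht
    refine ge_of_tendsto (hslope.mono_left hmono) ?_
    · filter_upwards [h01] with t ht
      have hfy : f xstar ≤ f (xstar + t • d) := key t ⟨ht.1.le, ht.2⟩
      have hs : slope (fun t : ℝ => f (xstar + t • d)) 0 t
          = (f (xstar + t • d) - f xstar) / t := by
        simp [slope_def_field]
      rw [hs]
      exact div_nonneg (sub_nonneg.mpr hfy) ht.1.le
  rw [hxd] at hnn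
  nlinarith [mul_pos (mul_pos hε hv) hlam]
end

section
/- Let $U$ be an open convex subset of a Banach space $X$, $f:U\to\mathbb{R}$ be $C^1$ with $Df(x)\ne 0$ on $U$, and suppose there exist a $C^1$ map $g:U\to X'$ and a positive continuous function $\lambda:U\to\mathbb{R}$ with $Df(x)=\lambda(x)g(x)$ for all $x\in U$. If $f$ is quasi-concave, then for every $x\in U$ and $w\in X$ with $\langle w,g(x)\rangle=0$, one has $\langle w, Dg(x)w\rangle\le 0$. -/
open Set

theorem stmt_1 {X : Type*} [NormedAddCommGroup X] [NormedSpace ℝ X] [CompleteSpace X]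
    (U : Set X) (hU : IsOpen U) (hUc : Convex ℝ U)
    (f : X → ℝ) (hf : ContDiffOn ℝ 1 f U)
    (hDf : ∀ x ∈ U, fderiv ℝ f x ≠ 0)
    (g : X → (X →L[ℝ] ℝ)) (hg : ContDiffOn ℝ 1 g U)
    (lam : X → ℝ) (hlamc : ContinuousOn lam U) (hlampos : ∀ x ∈ U, 0 < lam x)
    (heq : ∀ x ∈ U, fderiv ℝ f x = lam x • g x)
    (hqc : ∀ x ∈ U, ∀ y ∈ U, ∀ t ∈ Icc (0:ℝ) 1,
      min (f x) (f y) ≤ f ((1 - t) • x + t • y)) :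
    ∀ x ∈ U, ∀ w : X, g x w = 0 → fderiv ℝ g x w w ≤ 0 := by
  intro x hx w hw
  by_contra hc
  push_neg at hc
  set γ : X → ℝ → X := fun x t => x + t • w with hγdef
  set γ0 : ℝ → X := fun t => x + t • w with hγ0def
  have hγ0 : γ0 0 = x := by simp [hγ0def]
  have hγd : ∀ t : ℝ, HasDerivAt γ0 w t := by
    intro t
    have := (((hasDerivAt_id t).smul_const w).const_add x)
    simp only [one_smul] at this
    exact this
  have hγcont : Continuous γ0 := by
    fun_prop
  set h : ℝ → ℝ := fun t => g (γ0 t) w with hh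
  have hgx : DifferentiableAt ℝ g x :=
    (hg.contDiffAt (hU.mem_nhds hx)).differentiableAt one_ne_zero
  have hhd : HasDerivAt h (fderiv ℝ g x w w) 0 := by
    have h1 : HasDerivAt (fun t => g (γ0 t)) (fderiv ℝ g x w) 0 := by
      have hg' : HasFDerivAt g (fderiv ℝ g x) (γ0 0) := by rw [hγ0]; exact hgx.hasFDerivAt
      have := hg'.comp_hasDerivAt 0 (hγd 0)
      exact this
    have := h1.clm_apply (hasDerivAt_const 0 w)
    simpa [hγ0] using this
  have hh0 : h 0 = 0 := by simp [hh, hγ0, hw]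
  -- slope of h is eventually positive near 0
  have hslope : ∀ᶠ t in nhdsWithin (0:ℝ) {0}ᶜ, 0 < h t / t := by
    have := hasDerivAt_iff_tendsto_slope.mp hhd
    have h2 : ∀ᶠ y in nhds (fderiv ℝ g x w w), 0 < y := eventually_gt_nhds hc
    filter_upwards [this.eventually h2] with t ht
    simpa [slope, hh0, div_eq_inv_mul] using ht
  have hmemU : ∀ᶠ t in nhds (0:ℝ), γ0 t ∈ U := by
    have : ContinuousAt γ0 0 := hγcont.continuousAt
    exact this.preimage_mem_nhds (hγ0 ▸ hU.mem_nhds hx)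
  have hcomb : ∀ᶠ t in nhds (0:ℝ), γ0 t ∈ U ∧ (t ≠ 0 → 0 < h t / t) := by
    have := eventually_nhdsWithin_iff.mp hslope
    filter_upwards [hmemU, this] with t h1 h2
    exact ⟨h1, fun ht => h2 ht⟩
  rw [Metric.eventually_nhds_iff] at hcomb
  obtain ⟨ε, hε, hεprop⟩ := hcomb
  set t0 : ℝ := ε / 2 with ht0def
  have ht0pos : 0 < t0 := by positivity
  have ht0ε : t0 < ε := by simp [ht0def]; linarith
  have hprop : ∀ t : ℝ, |t| < ε → γ0 t ∈ U ∧ (t ≠ 0 → 0 < h t / t) := by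
    intro t ht
    exact hεprop (by simpa [Real.dist_eq] using ht)
  set φ : ℝ → ℝ := fun t => f (γ0 t) with hφ
  have hφd : ∀ t : ℝ, |t| < ε → HasDerivAt φ (lam (γ0 t) * h t) t := by
    intro t ht
    have hUt : γ0 t ∈ U := (hprop t ht).1
    have hfd : DifferentiableAt ℝ f (γ0 t) :=
      (hf.contDiffAt (hU.mem_nhds hUt)).differentiableAt one_ne_zero
    have := hfd.hasFDerivAt.comp_hasDerivAt t (hγd t)
    rw [heq _ hUt] at this
    simp [hh] at this
    exact this
  have habs : ∀ t : ℝ, |t| ≤ t0 → |t| < ε := fun t ht => lt_of_le_of_lt ht ht0ε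
  -- φ is strictly monotone on [0, t0]
  have hmono : StrictMonoOn φ (Icc 0 t0) := by
    apply strictMonoOn_of_deriv_pos (convex_Icc 0 t0)
    · intro t ht
      have : |t| < ε := habs t (abs_le.mpr ⟨by linarith [ht.1], ht.2⟩)
      exact ((hφd t this).continuousAt).continuousWithinAt
    · intro t ht
      rw [interior_Icc] at ht
      have htε : |t| < ε := habs t (abs_le.mpr ⟨by linarith [ht.1], le_of_lt ht.2⟩)
      rw [(hφd t htε).deriv]
      have hpos := (hprop t htε).2 (ne_of_gt ht.1)
      have hht : 0 < h t := by
        have := mul_pos hpos ht.1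
        rwa [div_mul_cancel₀ _ (ne_of_gt ht.1)] at this
      exact mul_pos (hlampos _ (hprop t htε).1) hht
  -- φ is strictly antitone on [-t0, 0]
  have hanti : StrictAntiOn φ (Icc (-t0) 0) := by
    apply strictAntiOn_of_deriv_neg (convex_Icc (-t0) 0)
    · intro t ht
      have : |t| < ε := habs t (abs_le.mpr ⟨ht.1, by linarith [ht.2]⟩)
      exact ((hφd t this).continuousAt).continuousWithinAt
    · intro t ht
      rw [interior_Icc] at ht
      have htε : |t| < ε := habs t (abs_le.mpr ⟨le_of_lt ht.1, by linarith [ht.2]⟩)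
      rw [(hφd t htε).deriv]
      have hpos := (hprop t htε).2 (ne_of_lt ht.2)
      have hht : h t < 0 := by
        by_contra hcon
        push_neg at hcon
        have : h t / t ≤ 0 := div_nonpos_of_nonneg_of_nonpos hcon (le_of_lt ht.2)
        linarith
      exact mul_neg_of_pos_of_neg (hlampos _ (hprop t htε).1) hht
  have h1 : φ 0 < φ t0 :=
    hmono ⟨le_refl 0, le_of_lt ht0pos⟩ ⟨le_of_lt ht0pos, le_refl t0⟩ ht0pos
  have h2 : φ 0 < φ (-t0) :=
    hanti ⟨le_refl (-t0), by linarith⟩ ⟨by linarith, le_refl 0⟩ (by linarith)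
  -- quasi-concavity at the midpoint
  have hmemp : γ0 t0 ∈ U := (hprop t0 (by rwa [abs_of_pos ht0pos])).1
  have hmemm : γ0 (-t0) ∈ U := (hprop (-t0) (by rwa [abs_neg, abs_of_pos ht0pos])).1
  have hmid : (1 - (1:ℝ)/2) • γ0 (-t0) + ((1:ℝ)/2) • γ0 t0 = x := by
    simp only [hγ0def]
    module
  have := hqc (γ0 (-t0)) hmemm (γ0 t0) hmemp (1/2) ⟨by norm_num, by norm_num⟩
  rw [hmid] at this
  have hfx : f x = φ 0 := by show f x = f (γ0 0); rw [hγ0]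
  rw [hfx] at this
  have : min (φ (-t0)) (φ t0) ≤ φ 0 := this
  rcases min_le_iff.mp this with h' | h' <;> linarith
end

section
/- Let $U$ be an open convex subset of a Banach space $X$, $f:U\to\mathbb{R}$ be $C^1$ with $Df(x)\ne 0$ on $U$, and suppose there exist a $C^1$ map $g:U\to X'$ and a positive continuous function $\lambda:U\to\mathbb{R}$ with $Df(x)=\lambda(x)g(x)$. If $\langle w, Dg(x)w\rangle\le 0$ for every $x\in U$ and every $w\in X$ with $\langle w,g(x)\rangle=0$, then $f$ is quasi-concave. -/
open Set

set_option maxHeartbeats 2000000 in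
private lemma core_stmt2 {X : Type*} [NormedAddCommGroup X] [NormedSpace ℝ X] [CompleteSpace X]
    (U : Set X) (hU : IsOpen U) (hUc : Convex ℝ U)
    (f : X → ℝ) (hf : ContDiffOn ℝ 1 f U)
    (hDf : ∀ x ∈ U, fderiv ℝ f x ≠ 0)
    (g : X → (X →L[ℝ] ℝ)) (hg : ContDiffOn ℝ 1 g U)
    (lam : X → ℝ) (hlampos : ∀ x ∈ U, 0 < lam x)
    (heq : ∀ x ∈ U, fderiv ℝ f x = lam x • g x)
    (hsec : ∀ x ∈ U, ∀ w : X, g x w = 0 → fderiv ℝ g x w w ≤ 0)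
    (x y : X) (hx : x ∈ U) (hy : y ∈ U)
    (t1 t2 : ℝ) (ht1 : t1 ∈ Icc (0:ℝ) 1) (ht2 : t2 ∈ Icc (0:ℝ) 1) (h12 : t1 < t2)
    (h1 : g (x + t1 • (y - x)) (y - x) < 0)
    (h2 : 0 < g (x + t2 • (y - x)) (y - x)) : False := by
  set w : X := y - x with hw
  set c : ℝ → X := fun t => x + t • w with hc
  have hcU : ∀ t ∈ Icc (0:ℝ) 1, c t ∈ U := by
    intro t ht
    have : c t = (1 - t) • x + t • y := by simp only [hc, hw]; module
    rw [this]
    exact hUc hx hy (by linarith [ht.1, ht.2]) ht.1 (by ring)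
  have hsub : Icc t1 t2 ⊆ Icc (0:ℝ) 1 := Icc_subset_Icc ht1.1 ht2.2
  have hcd : ∀ t : ℝ, HasDerivAt c w t := by
    intro t
    exact ((hasDerivAt_const t x).add ((hasDerivAt_id t).smul_const w)).congr_deriv (by simp)
  set h : ℝ → ℝ := fun t => g (c t) w with hh
  have hhc : ∀ t : ℝ, c t ∈ U → ContinuousAt h t := by
    intro t hmem
    have hgc : ContinuousAt (fun t => g (c t)) t :=
      ((hg.contDiffAt (hU.mem_nhds hmem)).continuousAt).comp (hcd t).continuousAt
    exact ((ContinuousLinearMap.apply ℝ ℝ w).continuous.continuousAt).comp hgc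
  -- the set of nonpositive points
  obtain ⟨S, hS⟩ : ∃ S : Set ℝ, S = Icc t1 t2 ∩ h ⁻¹' Iic 0 := ⟨_, rfl⟩
  have hScl : IsClosed S := by
    rw [hS]
    apply ContinuousOn.preimage_isClosed_of_isClosed _ isClosed_Icc isClosed_Iic
    exact fun t ht => ((hhc t (hcU t (hsub ht))).continuousWithinAt)
  have hSne : S.Nonempty := ⟨t1, by rw [hS]; exact ⟨⟨le_rfl, le_of_lt h12⟩, le_of_lt h1⟩⟩
  have hSbdd : BddAbove S := ⟨t2, fun t ht => by rw [hS] at ht; exact ht.1.2⟩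
  obtain ⟨τ, hτ⟩ : ∃ τ : ℝ, τ = sSup S := ⟨_, rfl⟩
  have hτS : τ ∈ Icc t1 t2 ∩ h ⁻¹' Iic 0 := by
    rw [← hS, hτ]; exact hScl.csSup_mem hSne hSbdd
  have hτ12 : τ ∈ Icc t1 t2 := hτS.1
  have hτU : c τ ∈ U := hcU τ (hsub hτ12)
  have hτlt : τ < t2 := lt_of_le_of_ne hτ12.2 (by rintro rfl; exact absurd hτS.2 (not_le.2 h2))
  have hpos : ∀ t, τ < t → t ≤ t2 → 0 < h t := by
    intro t htl htu
    by_contra hle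
    push_neg at hle
    have : t ∈ S := by rw [hS]; exact ⟨⟨le_trans hτ12.1 (le_of_lt htl), htu⟩, hle⟩
    exact absurd (hτ ▸ le_csSup hSbdd this) (not_le.2 htl)
  have hτ0 : h τ = 0 := by
    refine le_antisymm hτS.2 ?_
    have hlim : Filter.Tendsto h (nhdsWithin τ (Ioi τ)) (nhds (h τ)) :=
      ((hhc τ hτU).continuousWithinAt)
    refine le_of_tendsto_of_tendsto tendsto_const_nhds hlim ?_
    filter_upwards [Ioc_mem_nhdsGT_of_mem ⟨le_rfl, hτlt⟩] with t ht
    exact le_of_lt (hpos t ht.1 (le_trans ht.2 le_rfl))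
  -- choose direction u with g (c τ) u > 0
  have hgz : g (c τ) ≠ 0 := by
    intro h0
    apply hDf _ hτU
    rw [heq _ hτU, h0, smul_zero]
  obtain ⟨u0, hu0⟩ : ∃ u0 : X, g (c τ) u0 ≠ 0 := by
    by_contra hall; push_neg at hall
    exact hgz (ContinuousLinearMap.ext fun v => by simp [hall v])
  obtain ⟨u, hu⟩ : ∃ u : X, 0 < g (c τ) u := by
    rcases lt_or_gt_of_ne hu0 with hlt | hgt
    · exact ⟨-u0, by simpa using hlt⟩
    · exact ⟨u0, hgt⟩
  -- control neighborhood
  have hVopen : IsOpen (U ∩ (fun p => g p u) ⁻¹' Ioi 0) := by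
    refine ContinuousOn.isOpen_inter_preimage ?_ hU isOpen_Ioi
    intro p hp
    exact (((ContinuousLinearMap.apply ℝ ℝ u).continuous.continuousAt).comp
      ((hg.contDiffAt (hU.mem_nhds hp)).continuousAt)).continuousWithinAt
  obtain ⟨ε₀, hε₀, hball⟩ := Metric.isOpen_iff.mp hVopen (c τ) ⟨hτU, hu⟩
  -- the ODE for the level curve offset
  obtain ⟨F, hF⟩ : ∃ F : ℝ × ℝ → ℝ,
      F = fun p => -(g (x + p.1 • w + p.2 • u) w / g (x + p.1 • w + p.2 • u) u) := ⟨_, rfl⟩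
  have hFc : ∀ p : ℝ × ℝ, (x + p.1 • w + p.2 • u) ∈ U →
      g (x + p.1 • w + p.2 • u) u ≠ 0 → ContDiffAt ℝ 1 F p := by
    intro p hpU hpne
    rw [hF]
    have hQc : ContDiff ℝ 1 (fun p : ℝ × ℝ => x + p.1 • w + p.2 • u) :=
      (contDiff_const.add (contDiff_fst.smul contDiff_const)).add
        (contDiff_snd.smul contDiff_const)
    have hgQ : ContDiffAt ℝ 1 (fun p : ℝ × ℝ => g (x + p.1 • w + p.2 • u)) p :=
      (hg.contDiffAt (hU.mem_nhds hpU)).comp p hQc.contDiffAt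
    exact ((hgQ.clm_apply contDiffAt_const).div (hgQ.clm_apply contDiffAt_const) hpne).neg
  obtain ⟨V, hV⟩ : ∃ V : ℝ × ℝ → ℝ × ℝ, V = fun p => ((1:ℝ), F p) := ⟨_, rfl⟩
  have hQτ : x + τ • w + (0:ℝ) • u = c τ := by simp [hc]
  have hVc : ContDiffAt ℝ 1 V ((τ, 0) : ℝ × ℝ) := by
    rw [hV]
    exact contDiffAt_const.prodMk (hFc (τ, 0) (by rw [hQτ]; exact hτU)
      (by rw [hQτ]; exact ne_of_gt hu))
  obtain ⟨p, hp0, ε, hε, hpd⟩ := hVc.exists_forall_mem_closedBall_exists_eq_forall_mem_Ioo_hasDerivAt₀ τ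
  have hτIoo : τ ∈ Ioo (τ - ε) (τ + ε) := ⟨by linarith, by linarith⟩
  -- first coordinate of the solution is the identity
  have hp1d : ∀ t ∈ Ioo (τ - ε) (τ + ε),
      HasDerivWithinAt (fun t => (p t).1 - t) 0 (Ioo (τ - ε) (τ + ε)) t := by
    intro t ht
    have h1 : HasDerivAt (fun t => (p t).1) (V (p t)).1 t := by
      simpa [Function.comp_def] using
        (ContinuousLinearMap.fst ℝ ℝ ℝ).hasFDerivAt.comp_hasDerivAt t (hpd t ht)
    have h2 := h1.sub (hasDerivAt_id t)
    rw [hV] at h2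
    simpa [Pi.sub_def] using h2.hasDerivWithinAt
  have hp1 : ∀ t ∈ Ioo (τ - ε) (τ + ε), (p t).1 = t := by
    intro t ht
    have hb := Convex.norm_image_sub_le_of_norm_hasDerivWithin_le (C := 0) hp1d
      (fun s _ => by simp) (convex_Ioo _ _) hτIoo ht
    have hfτ : (p τ).1 - τ = 0 := by rw [hp0]; simp
    rw [hfτ] at hb
    have := by simpa using hb
    linarith
  obtain ⟨ρ, hρdef⟩ : ∃ ρ : ℝ → ℝ, ρ = fun t => (p t).2 := ⟨_, rfl⟩
  have hρτ : ρ τ = 0 := by rw [hρdef]; simp [hp0]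
  have hpt : ∀ t ∈ Ioo (τ - ε) (τ + ε), p t = (t, ρ t) := by
    intro t ht
    rw [hρdef]
    exact Prod.ext_iff.mpr ⟨hp1 t ht, rfl⟩
  have hρd : ∀ t ∈ Ioo (τ - ε) (τ + ε), HasDerivAt ρ (F (t, ρ t)) t := by
    intro t ht
    have h2 : HasDerivAt (fun t => (p t).2) (V (p t)).2 t := by
      simpa [Function.comp_def] using
        (ContinuousLinearMap.snd ℝ ℝ ℝ).hasFDerivAt.comp_hasDerivAt t (hpd t ht)
    rw [hpt t ht, hV] at h2
    simp only [] at h2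
    rw [← hρdef] at h2
    exact h2
  -- choose the working interval length η
  have hρcont : ContinuousAt ρ τ := (hρd τ hτIoo).continuousAt
  obtain ⟨δ, hδ, hδP⟩ := Metric.continuousAt_iff.mp hρcont (ε₀ / (2 * (‖u‖ + 1)))
    (by positivity)
  obtain ⟨η, hηdef⟩ : ∃ η : ℝ,
      η = min (min (ε / 2) (t2 - τ)) (min (δ / 2) (ε₀ / (2 * (‖w‖ + 1)))) := ⟨_, rfl⟩
  have hu1 : (0:ℝ) < ‖u‖ + 1 := by positivity
  have hw1 : (0:ℝ) < ‖w‖ + 1 := by positivity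
  have hη : 0 < η := by
    rw [hηdef]
    refine lt_min (lt_min (by linarith) (by linarith)) (lt_min (by linarith) (by positivity))
  have hηε : η ≤ ε / 2 := hηdef ▸ le_trans (min_le_left _ _) (min_le_left _ _)
  have hηt2 : τ + η ≤ t2 := by
    have := hηdef ▸ le_trans (min_le_left _ _) (min_le_right _ _)
    linarith
  have hηδ : η ≤ δ / 2 := hηdef ▸ le_trans (min_le_right _ _) (min_le_left _ _)
  have hηε₀ : η ≤ ε₀ / (2 * (‖w‖ + 1)) := hηdef ▸ le_trans (min_le_right _ _) (min_le_right _ _)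
  have hJIoo : Icc τ (τ + η) ⊆ Ioo (τ - ε) (τ + ε) := by
    intro t ht
    exact ⟨by linarith [ht.1], by linarith [ht.2]⟩
  have hρsmall : ∀ t ∈ Icc τ (τ + η), |ρ t| < ε₀ / (2 * (‖u‖ + 1)) := by
    intro t ht
    have hd : dist t τ < δ := by
      rw [Real.dist_eq, abs_of_nonneg (by linarith [ht.1])]
      linarith [ht.2]
    have := hδP hd
    rw [Real.dist_eq, hρτ, sub_zero] at this
    exact this
  have hctrl : ∀ t ∈ Icc τ (τ + η), ∀ s : ℝ, |s| ≤ |ρ t| →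
      (c t + s • u ∈ U ∧ 0 < g (c t + s • u) u) := by
    intro t ht s hs
    have hmem : c t + s • u ∈ Metric.ball (c τ) ε₀ := by
      rw [Metric.mem_ball, dist_eq_norm]
      have heq2 : c t + s • u - c τ = (t - τ) • w + s • u := by
        simp only [hc]; module
      rw [heq2]
      have hb1 : ‖(t - τ) • w‖ ≤ η * ‖w‖ := by
        rw [norm_smul, Real.norm_eq_abs, abs_of_nonneg (by linarith [ht.1])]
        have := ht.2
        nlinarith [norm_nonneg w]
      have hb2 : ‖s • u‖ ≤ |ρ t| * ‖u‖ := by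
        rw [norm_smul, Real.norm_eq_abs]
        nlinarith [norm_nonneg u]
      have hb3 : η * ‖w‖ < ε₀ / 2 := by
        have h1 : η * ‖w‖ ≤ (ε₀ / (2 * (‖w‖ + 1))) * ‖w‖ := by nlinarith [norm_nonneg w]
        have h2 : (ε₀ / (2 * (‖w‖ + 1))) * ‖w‖ < ε₀ / 2 := by
          rw [div_mul_eq_mul_div, div_lt_div_iff₀ (by positivity) (by norm_num)]
          nlinarith [norm_nonneg w]
        linarith
      have hb4 : |ρ t| * ‖u‖ < ε₀ / 2 := by
        have h1 := hρsmall t ht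
        have h2 : (ε₀ / (2 * (‖u‖ + 1))) * ‖u‖ < ε₀ / 2 := by
          rw [div_mul_eq_mul_div, div_lt_div_iff₀ (by positivity) (by norm_num)]
          nlinarith [norm_nonneg u]
        nlinarith [norm_nonneg u, abs_nonneg (ρ t)]
      calc ‖(t - τ) • w + s • u‖ ≤ ‖(t - τ) • w‖ + ‖s • u‖ := norm_add_le _ _
        _ < ε₀ := by linarith
    exact ⟨(hball hmem).1, (hball hmem).2⟩
  -- the level curve
  obtain ⟨γ, hγdef⟩ : ∃ γ : ℝ → X, γ = fun t => c t + ρ t • u := ⟨_, rfl⟩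
  obtain ⟨ρ', hρ'def⟩ : ∃ ρ' : ℝ → ℝ, ρ' = fun t => F (t, ρ t) := ⟨_, rfl⟩
  have hγU : ∀ t ∈ Icc τ (τ + η), γ t ∈ U := by
    intro t ht; rw [hγdef]; exact (hctrl t ht (ρ t) le_rfl).1
  have hγgu : ∀ t ∈ Icc τ (τ + η), 0 < g (γ t) u := by
    intro t ht; rw [hγdef]; exact (hctrl t ht (ρ t) le_rfl).2
  have hρ'val : ∀ t : ℝ, ρ' t = -(g (γ t) w / g (γ t) u) := by
    intro t; simp only [hρ'def, hγdef, hF, hc]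
  have hγd : ∀ t ∈ Icc τ (τ + η), HasDerivAt γ (w + ρ' t • u) t := by
    intro t ht
    have hd := (hcd t).add ((hρd t (hJIoo ht)).smul_const u)
    rw [hγdef]
    simpa [hρ'def, Pi.add_def] using hd
  have hzero : ∀ t ∈ Icc τ (τ + η), g (γ t) (w + ρ' t • u) = 0 := by
    intro t ht
    have hne : g (γ t) u ≠ 0 := ne_of_gt (hγgu t ht)
    rw [map_add, map_smul, smul_eq_mul, hρ'val t]
    field_simp; ring
  have hfγd : ∀ t ∈ Icc τ (τ + η), HasDerivAt (fun s => f (γ s)) 0 t := by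
    intro t ht
    have hmem := hγU t ht
    have hdf : HasFDerivAt f (fderiv ℝ f (γ t)) (γ t) :=
      ((hf.contDiffAt (hU.mem_nhds hmem)).differentiableAt one_ne_zero).hasFDerivAt
    have hcomp := hdf.comp_hasDerivAt t (hγd t ht)
    rw [heq _ hmem] at hcomp
    have hval : (lam (γ t) • g (γ t)) (w + ρ' t • u) = 0 := by
      rw [ContinuousLinearMap.smul_apply, hzero t ht, smul_zero]
    rw [hval] at hcomp
    simpa [Function.comp_def] using hcomp
  have hγτ : γ τ = c τ := by rw [hγdef]; simp [hρτ]
  have hτJ : τ ∈ Icc τ (τ + η) := ⟨le_rfl, by linarith⟩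
  have hfγconst : ∀ t ∈ Icc τ (τ + η), f (γ t) = f (c τ) := by
    intro t ht
    have hb := Convex.norm_image_sub_le_of_norm_hasDerivWithin_le (C := 0)
      (fun s hs => (hfγd s hs).hasDerivWithinAt) (fun s _ => by simp)
      (convex_Icc _ _) hτJ ht
    rw [hγτ] at hb
    have := by simpa using hb
    linarith
  -- second derivative of the offset is nonnegative
  have hγQ : ∀ t : ℝ, x + t • w + ρ t • u = γ t := by
    intro t; rw [hγdef]
  have hρ'd : ∀ t ∈ Icc τ (τ + η), HasDerivAt ρ' ((fderiv ℝ F (t, ρ t)) (1, ρ' t)) t := by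
    intro t ht
    have hFct : ContDiffAt ℝ 1 F (t, ρ t) := by
      apply hFc (t, ρ t)
      · rw [hγQ t]; exact hγU t ht
      · rw [hγQ t]; exact ne_of_gt (hγgu t ht)
    have hpair : HasDerivAt (fun s => ((s, ρ s) : ℝ × ℝ)) (1, F (t, ρ t)) t :=
      (hasDerivAt_id t).prodMk (hρd t (hJIoo ht))
    have hdd := (hFct.differentiableAt one_ne_zero).hasFDerivAt.comp_hasDerivAt t hpair
    rw [hρ'def]
    simpa [Function.comp_def, hρ'def] using hdd
  have hr2 : ∀ t ∈ Ioo τ (τ + η), 0 ≤ (fderiv ℝ F (t, ρ t)) (1, ρ' t) := by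
    intro t ht
    have htJ : t ∈ Icc τ (τ + η) := Ioo_subset_Icc_self ht
    have hgd : HasFDerivAt g (fderiv ℝ g (γ t)) (γ t) :=
      ((hg.contDiffAt (hU.mem_nhds (hγU t htJ))).differentiableAt one_ne_zero).hasFDerivAt
    have hgγd : HasDerivAt (fun s => g (γ s)) ((fderiv ℝ g (γ t)) (w + ρ' t • u)) t := by
      simpa [Function.comp_def] using hgd.comp_hasDerivAt t (hγd t htJ)
    have hud : HasDerivAt (fun s => w + ρ' s • u)
        (((fderiv ℝ F (t, ρ t)) (1, ρ' t)) • u) t := by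
      simpa [Pi.add_def] using (hasDerivAt_const t w).add ((hρ'd t htJ).smul_const u)
    have hψd := hgγd.clm_apply hud
    have hev : (fun s => g (γ s) (w + ρ' s • u)) =ᶠ[nhds t] (fun _ => (0:ℝ)) := by
      filter_upwards [Ioo_mem_nhds ht.1 ht.2] with s hs
      exact hzero s (Ioo_subset_Icc_self hs)
    have hψd0 : HasDerivAt (fun s => g (γ s) (w + ρ' s • u)) 0 t :=
      (hasDerivAt_const t (0:ℝ)).congr_of_eventuallyEq hev
    have huniq := hψd.unique hψd0
    rw [map_smul, smul_eq_mul] at huniq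
    have hsec' := hsec (γ t) (hγU t htJ) (w + ρ' t • u) (hzero t htJ)
    have hgu := hγgu t htJ
    by_contra hneg
    push_neg at hneg
    have : (fderiv ℝ F (t, ρ t)) (1, ρ' t) * g (γ t) u < 0 :=
      mul_neg_of_neg_of_pos hneg hgu
    linarith
  -- ρ' is monotone on J, hence nonnegative; hence ρ is nonnegative
  have hτ0' : g (c τ) w = 0 := by simpa [hh] using hτ0
  have hρ'τ : ρ' τ = 0 := by
    rw [hρ'val τ, hγτ, hτ0']
    simp
  have hρ'mono : MonotoneOn ρ' (Icc τ (τ + η)) := by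
    apply monotoneOn_of_deriv_nonneg (convex_Icc _ _)
      (fun t ht => (hρ'd t ht).continuousAt.continuousWithinAt)
    · intro t ht
      rw [interior_Icc] at ht
      exact (hρ'd t (Ioo_subset_Icc_self ht)).differentiableAt.differentiableWithinAt
    · intro t ht
      rw [interior_Icc] at ht
      rw [(hρ'd t (Ioo_subset_Icc_self ht)).deriv]
      exact hr2 t ht
  have hρ'nonneg : ∀ t ∈ Icc τ (τ + η), 0 ≤ ρ' t := fun t ht =>
    hρ'τ ▸ hρ'mono hτJ ht ht.1
  have hρmono : MonotoneOn ρ (Icc τ (τ + η)) := by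
    apply monotoneOn_of_deriv_nonneg (convex_Icc _ _)
      (fun t ht => (hρd t (hJIoo ht)).continuousAt.continuousWithinAt)
    · intro t ht
      rw [interior_Icc] at ht
      exact (hρd t (hJIoo (Ioo_subset_Icc_self ht))).differentiableAt.differentiableWithinAt
    · intro t ht
      rw [interior_Icc] at ht
      rw [(hρd t (hJIoo (Ioo_subset_Icc_self ht))).deriv]
      have := hρ'nonneg t (Ioo_subset_Icc_self ht)
      rwa [hρ'def] at this
  have hρnonneg : 0 ≤ ρ (τ + η) := by
    have := hρmono hτJ ⟨by linarith, le_rfl⟩ (by linarith)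
    rwa [hρτ] at this
  -- φ is strictly increasing on J
  have hφd : ∀ t ∈ Icc (0:ℝ) 1, HasDerivAt (fun t => f (c t)) (lam (c t) * g (c t) w) t := by
    intro t ht
    have hmem := hcU t ht
    have hdf : HasFDerivAt f (fderiv ℝ f (c t)) (c t) :=
      ((hf.contDiffAt (hU.mem_nhds hmem)).differentiableAt one_ne_zero).hasFDerivAt
    have hcomp := hdf.comp_hasDerivAt t (hcd t)
    rw [heq _ hmem] at hcomp
    simpa [Function.comp_def] using hcomp
  have hJ01 : Icc τ (τ + η) ⊆ Icc (0:ℝ) 1 := by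
    intro t ht
    refine ⟨by linarith [ht.1, hτ12.1, ht1.1], ?_⟩
    have hle : t ≤ t2 := by linarith [ht.2]
    linarith [ht2.2]
  have htJ' : τ + η ∈ Icc τ (τ + η) := ⟨by linarith, le_rfl⟩
  have hφmono : StrictMonoOn (fun t => f (c t)) (Icc τ (τ + η)) := by
    apply strictMonoOn_of_deriv_pos (convex_Icc _ _)
      (fun t ht => ((hφd t (hJ01 ht)).continuousAt).continuousWithinAt)
    intro t ht
    rw [interior_Icc] at ht
    rw [(hφd t (hJ01 (Ioo_subset_Icc_self ht))).deriv]
    have hht : 0 < h t := hpos t ht.1 (by linarith [ht.2])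
    have hht' : 0 < g (c t) w := by simpa [hh] using hht
    exact mul_pos (hlampos _ (hcU t (hJ01 (Ioo_subset_Icc_self ht)))) hht'
  have hφlt : f (c τ) < f (c (τ + η)) := hφmono hτJ htJ' (by linarith)
  -- f is monotone in the u direction at τ + η
  have hθd : ∀ s ∈ Icc (0:ℝ) (ρ (τ + η)),
      HasDerivAt (fun s => f (c (τ + η) + s • u))
        (lam (c (τ + η) + s • u) * g (c (τ + η) + s • u) u) s := by
    intro s hs
    have hmem : c (τ + η) + s • u ∈ U := by
      refine (hctrl _ htJ' s ?_).1
      rw [abs_of_nonneg hs.1, abs_of_nonneg hρnonneg]; exact hs.2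
    have hdf : HasFDerivAt f (fderiv ℝ f (c (τ + η) + s • u)) (c (τ + η) + s • u) :=
      ((hf.contDiffAt (hU.mem_nhds hmem)).differentiableAt one_ne_zero).hasFDerivAt
    have hind : HasDerivAt (fun s : ℝ => c (τ + η) + s • u) u s := by
      simpa [Pi.add_def] using (hasDerivAt_const s (c (τ + η))).add ((hasDerivAt_id s).smul_const u)
    have hcomp := hdf.comp_hasDerivAt s hind
    rw [heq _ hmem] at hcomp
    simpa [Function.comp_def] using hcomp
  have hθmono : MonotoneOn (fun s => f (c (τ + η) + s • u)) (Icc 0 (ρ (τ + η))) := by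
    apply monotoneOn_of_deriv_nonneg (convex_Icc _ _)
      (fun s hs => (hθd s hs).continuousAt.continuousWithinAt)
    · intro s hs
      rw [interior_Icc] at hs
      exact (hθd s (Ioo_subset_Icc_self hs)).differentiableAt.differentiableWithinAt
    · intro s hs
      rw [interior_Icc] at hs
      have hs' : s ∈ Icc (0:ℝ) (ρ (τ + η)) := Ioo_subset_Icc_self hs
      rw [(hθd s hs').deriv]
      have hmem : c (τ + η) + s • u ∈ U ∧ 0 < g (c (τ + η) + s • u) u := by
        refine hctrl _ htJ' s ?_
        rw [abs_of_nonneg hs'.1, abs_of_nonneg hρnonneg]; exact hs'.2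
      exact le_of_lt (mul_pos (hlampos _ hmem.1) hmem.2)
  -- contradiction
  have hA : f (γ (τ + η)) = f (c τ) := hfγconst _ htJ'
  have hB : f (c (τ + η)) ≤ f (γ (τ + η)) := by
    have hm := hθmono (left_mem_Icc.mpr hρnonneg) (right_mem_Icc.mpr hρnonneg) hρnonneg
    simpa [hγdef] using hm
  linarith

theorem stmt_2 {X : Type*} [NormedAddCommGroup X] [NormedSpace ℝ X] [CompleteSpace X]
    (U : Set X) (hU : IsOpen U) (hUc : Convex ℝ U)
    (f : X → ℝ) (hf : ContDiffOn ℝ 1 f U)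
    (hDf : ∀ x ∈ U, fderiv ℝ f x ≠ 0)
    (g : X → (X →L[ℝ] ℝ)) (hg : ContDiffOn ℝ 1 g U)
    (lam : X → ℝ) (hlamc : ContinuousOn lam U) (hlampos : ∀ x ∈ U, 0 < lam x)
    (heq : ∀ x ∈ U, fderiv ℝ f x = lam x • g x)
    (hsec : ∀ x ∈ U, ∀ w : X, g x w = 0 → fderiv ℝ g x w w ≤ 0) :
    ∀ x ∈ U, ∀ y ∈ U, ∀ t ∈ Icc (0:ℝ) 1,
      min (f x) (f y) ≤ f ((1 - t) • x + t • y) := by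
  intro x hx y hy t0 ht0
  by_contra hcon
  push_neg at hcon
  set w : X := y - x with hw
  set c : ℝ → X := fun t => x + t • w with hc
  have hc_eq : ∀ t : ℝ, (1 - t) • x + t • y = c t := by
    intro t; simp only [hc, hw]; module
  have hcU : ∀ t ∈ Icc (0:ℝ) 1, c t ∈ U := by
    intro t ht
    rw [← hc_eq]
    exact hUc hx hy (by linarith [ht.1, ht.2]) ht.1 (by ring)
  rw [hc_eq] at hcon
  -- t0 interior
  have ht00 : t0 ≠ 0 := by
    rintro rfl; simp only [hc, zero_smul, add_zero] at hcon
    exact absurd hcon (not_lt.2 (min_le_left _ _))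
  have ht01 : t0 ≠ 1 := by
    rintro rfl
    have : c 1 = y := by simp [hc, hw]
    rw [this] at hcon
    exact absurd hcon (not_lt.2 (min_le_right _ _))
  have ht0i : t0 ∈ Ioo (0:ℝ) 1 := ⟨lt_of_le_of_ne ht0.1 (Ne.symm ht00), lt_of_le_of_ne ht0.2 ht01⟩
  -- derivative of φ = f ∘ c
  set φ : ℝ → ℝ := fun t => f (c t) with hφ
  have hcd : ∀ t : ℝ, HasDerivAt c w t := by
    intro t
    exact ((hasDerivAt_const t x).add ((hasDerivAt_id t).smul_const w)).congr_deriv (by simp)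
  have hφd : ∀ t ∈ Icc (0:ℝ) 1, HasDerivAt φ (lam (c t) * g (c t) w) t := by
    intro t ht
    have hmem := hcU t ht
    have hdf : HasFDerivAt f (fderiv ℝ f (c t)) (c t) :=
      ((hf.contDiffAt (hU.mem_nhds hmem)).differentiableAt one_ne_zero).hasFDerivAt
    have := hdf.comp_hasDerivAt t (hcd t)
    rw [heq _ hmem] at this
    simpa [Function.comp_def] using this
  have hφcont : ∀ s ⊆ Icc (0:ℝ) 1, ContinuousOn φ s := fun s hs t ht =>
    ((hφd t (hs ht)).continuousAt).continuousWithinAt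
  -- MVT on [0, t0]
  have hsub1 : Icc (0:ℝ) t0 ⊆ Icc 0 1 := Icc_subset_Icc le_rfl ht0.2
  obtain ⟨t1, ht1m, ht1v⟩ := exists_hasDerivAt_eq_slope φ (fun t => lam (c t) * g (c t) w)
    ht0i.1 (hφcont _ hsub1)
    (fun s hs => hφd s (hsub1 (Ioo_subset_Icc_self hs)))
  have hφ0 : φ 0 = f x := by simp [hφ, hc]
  have hslope1 : (φ t0 - φ 0) / (t0 - 0) < 0 := by
    apply div_neg_of_neg_of_pos
    · rw [hφ0]; have := lt_min_iff.mp hcon; linarith [this.1]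
    · linarith [ht0i.1]
  rw [← ht1v] at hslope1
  have hg1 : g (c t1) w < 0 := by
    by_contra hge
    push_neg at hge
    nlinarith [hlampos _ (hcU t1 (hsub1 (Ioo_subset_Icc_self ht1m)))]
  -- MVT on [t0, 1]
  have hsub2 : Icc t0 1 ⊆ Icc (0:ℝ) 1 := Icc_subset_Icc ht0.1 le_rfl
  obtain ⟨t2, ht2m, ht2v⟩ := exists_hasDerivAt_eq_slope φ (fun t => lam (c t) * g (c t) w)
    ht0i.2 (hφcont _ hsub2)
    (fun s hs => hφd s (hsub2 (Ioo_subset_Icc_self hs)))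
  have hφ1 : φ 1 = f y := by simp [hφ, hc, hw]
  have hslope2 : 0 < (φ 1 - φ t0) / (1 - t0) := by
    apply div_pos
    · rw [hφ1]; have := lt_min_iff.mp hcon; linarith [this.2]
    · linarith [ht0i.2]
  rw [← ht2v] at hslope2
  have hg2 : 0 < g (c t2) w := by
    by_contra hge
    push_neg at hge
    nlinarith [hlampos _ (hcU t2 (hsub2 (Ioo_subset_Icc_self ht2m)))]
  exact core_stmt2 U hU hUc f hf hDf g hg lam hlampos heq hsec x y hx hy t1 t2
    (hsub1 (Ioo_subset_Icc_self ht1m)) (hsub2 (Ioo_subset_Icc_self ht2m))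
    (lt_trans ht1m.2 ht2m.1) hg1 hg2
end

section
/- Let $U$ be an open convex subset of a Banach space $X$, $f:U\to\mathbb{R}$ be $C^1$, and suppose there exist a $C^1$ map $g:U\to X'$ and a positive continuous function $\lambda:U\to\mathbb{R}$ with $Df(x)=\lambda(x)g(x)$ for all $x\in U$. If $\langle w,Dg(x)w\rangle<0$ for every $x\in U$ and every $w\in X$ with $w\ne 0$ and $\langle w,g(x)\rangle=0$, then $f$ is strictly quasi-concave. -/
open Set

theorem stmt_3 {X : Type*} [NormedAddCommGroup X] [NormedSpace ℝ X] [CompleteSpace X]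
    (U : Set X) (hU : IsOpen U) (hUc : Convex ℝ U)
    (f : X → ℝ) (hf : ContDiffOn ℝ 1 f U)
    (g : X → (X →L[ℝ] ℝ)) (hg : ContDiffOn ℝ 1 g U)
    (lam : X → ℝ) (hlamc : ContinuousOn lam U) (hlampos : ∀ x ∈ U, 0 < lam x)
    (heq : ∀ x ∈ U, fderiv ℝ f x = lam x • g x)
    (hsec : ∀ x ∈ U, ∀ w : X, w ≠ 0 → g x w = 0 → fderiv ℝ g x w w < 0) :
    ∀ x ∈ U, ∀ y ∈ U, x ≠ y → ∀ t ∈ Ioo (0:ℝ) 1,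
      min (f x) (f y) < f ((1 - t) • x + t • y) := by
  intro x hx y hy hxy t ht
  set w : X := y - x with hw
  have hwne : w ≠ 0 := sub_ne_zero.mpr (Ne.symm hxy)
  set c : ℝ → X := fun s => x + s • w with hc
  have hcU : ∀ s ∈ Icc (0:ℝ) 1, c s ∈ U := by
    intro s hs
    have h := hUc hx hy (by linarith [hs.2] : (0:ℝ) ≤ 1 - s) hs.1 (by ring)
    have : c s = (1 - s) • x + s • y := by
      simp only [hc, hw]; module
    rw [this]; exact h
  set φ : ℝ → ℝ := fun s => f (c s) with hφ
  set ψ : ℝ → ℝ := fun s => g (c s) w with hψ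
  have hcd : ∀ s : ℝ, HasDerivAt c w s := by
    intro s
    simpa [hc] using ((hasDerivAt_id s).smul_const w).const_add x
  have hfd : ∀ s ∈ Icc (0:ℝ) 1, HasDerivAt φ (lam (c s) * ψ s) s := by
    intro s hs
    have hmem := hcU s hs
    have hdf : DifferentiableAt ℝ f (c s) :=
      (hf.contDiffAt (hU.mem_nhds hmem)).differentiableAt one_ne_zero
    have h1 := hdf.hasFDerivAt.comp_hasDerivAt s (hcd s)
    rw [heq _ hmem] at h1
    simp only [ContinuousLinearMap.smul_apply, smul_eq_mul] at h1; exact h1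
  have hφcont : ContinuousOn φ (Icc (0:ℝ) 1) := fun s hs =>
    (hfd s hs).continuousAt.continuousWithinAt
  have hφ0 : φ 0 = f x := by simp [hφ, hc]
  have hφ1 : φ 1 = f y := by
    have : c 1 = y := by simp only [hc, hw]; module
    simp [hφ, this]
  have hpt : (1 - t) • x + t • y = c t := by simp only [hc, hw]; module
  rw [hpt]
  by_contra hcon
  push_neg at hcon
  -- hcon : φ t ≤ min (f x) (f y)
  obtain ⟨t₀, ht₀mem, ht₀min⟩ :=
    isCompact_Icc.exists_isMinOn (nonempty_Icc.mpr zero_le_one) hφcont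
  have key : ∃ t₁ ∈ Ioo (0:ℝ) 1, IsMinOn φ (Icc 0 1) t₁ := by
    by_cases hio : t₀ ∈ Ioo (0:ℝ) 1
    · exact ⟨t₀, hio, ht₀min⟩
    · refine ⟨t, ht, ?_⟩
      have ht01 : t₀ = 0 ∨ t₀ = 1 := by
        rcases lt_or_eq_of_le ht₀mem.1 with h0 | h0
        · rcases lt_or_eq_of_le ht₀mem.2 with h1 | h1
          · exact absurd ⟨h0, h1⟩ hio
          · right; exact h1
        · left; exact h0.symm
      have hmin_le : min (f x) (f y) ≤ φ t₀ := by
        rcases ht01 with h | h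
        · rw [h, hφ0]; exact min_le_left _ _
        · rw [h, hφ1]; exact min_le_right _ _
      intro u hu
      have h1 : φ t₀ ≤ φ u := ht₀min hu
      have h2 : φ t ≤ φ u := by
        calc φ t ≤ min (f x) (f y) := hcon
        _ ≤ φ t₀ := hmin_le
        _ ≤ φ u := h1
      exact h2
  obtain ⟨t₁, ht₁, ht₁min⟩ := key
  have ht₁Icc : t₁ ∈ Icc (0:ℝ) 1 := Ioo_subset_Icc_self ht₁
  have hmem₁ : c t₁ ∈ U := hcU t₁ ht₁Icc
  have hloc : IsLocalMin φ t₁ := ht₁min.isLocalMin (Icc_mem_nhds ht₁.1 ht₁.2)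
  have hψt₁ : ψ t₁ = 0 := by
    have hz : deriv φ t₁ = 0 := hloc.deriv_eq_zero
    rw [(hfd t₁ ht₁Icc).deriv] at hz
    rcases mul_eq_zero.mp hz with h | h
    · exact absurd h (ne_of_gt (hlampos _ hmem₁))
    · exact h
  have hdg : DifferentiableAt ℝ g (c t₁) :=
    (hg.contDiffAt (hU.mem_nhds hmem₁)).differentiableAt one_ne_zero
  have h2 : HasDerivAt (fun u => g (c u)) (fderiv ℝ g (c t₁) w) t₁ :=
    hdg.hasFDerivAt.comp_hasDerivAt t₁ (hcd t₁)
  have h3 : HasDerivAt ψ ((fderiv ℝ g (c t₁)) w w) t₁ := by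
    have := h2.clm_apply (hasDerivAt_const t₁ w)
    simpa [hψ] using this
  have hD : (fderiv ℝ g (c t₁)) w w < 0 := hsec _ hmem₁ w hwne hψt₁
  have hslope := hasDerivAt_iff_tendsto_slope.mp h3
  have hev : ∀ᶠ s in nhdsWithin t₁ (Iio t₁), slope ψ t₁ s < 0 :=
    (hslope.mono_left (nhdsWithin_mono _ (fun u hu => ne_of_lt hu))).eventually
      (Iio_mem_nhds hD)
  obtain ⟨a, ha, hA⟩ := mem_nhdsLT_iff_exists_Ioo_subset.mp hev
  have hψpos : ∀ u ∈ Ioo a t₁, 0 < ψ u := by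
    intro u hu
    have hs : slope ψ t₁ u < 0 := hA hu
    have : slope ψ t₁ u = ψ u / (u - t₁) := by
      rw [slope_def_field, hψt₁]; ring
    rw [this] at hs
    rcases div_neg_iff.mp hs with ⟨h1, _⟩ | ⟨_, h2⟩
    · exact h1
    · linarith [hu.2]
  set a' : ℝ := max a 0 with ha'
  have ha't : a' < t₁ := max_lt ha ht₁.1
  set s : ℝ := (a' + t₁) / 2 with hs
  have hsa' : a' < s := by rw [hs]; linarith
  have hst : s < t₁ := by rw [hs]; linarith
  have hs0 : 0 ≤ s := le_trans (le_max_right a 0) hsa'.le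
  have hsub : Icc s t₁ ⊆ Icc (0:ℝ) 1 := Icc_subset_Icc hs0 ht₁Icc.2
  have hmono : StrictMonoOn φ (Icc s t₁) := by
    apply strictMonoOn_of_deriv_pos (convex_Icc s t₁) (hφcont.mono hsub)
    intro u hu
    rw [interior_Icc] at hu
    have huIcc : u ∈ Icc (0:ℝ) 1 := hsub (Ioo_subset_Icc_self hu)
    rw [(hfd u huIcc).deriv]
    have hψu : 0 < ψ u :=
      hψpos u ⟨lt_of_le_of_lt (le_max_left a 0) (lt_trans hsa' hu.1), hu.2⟩
    exact mul_pos (hlampos _ (hcU u huIcc)) hψu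
  have hlt : φ s < φ t₁ :=
    hmono (left_mem_Icc.mpr hst.le) (right_mem_Icc.mpr hst.le) hst
  have hge : φ t₁ ≤ φ s := ht₁min (hsub (left_mem_Icc.mpr hst.le))
  linarith
end

section
/- Let $U\subset\mathbb{R}^n$ be open and convex and $f:U\to\mathbb{R}$ be $C^2$ with $\nabla f(x)\ne 0$ for all $x\in U$. Then $f$ is quasi-concave if and only if $v^T D^2 f(x) v\le 0$ for every $x\in U$ and $v\in\mathbb{R}^n$ with $\nabla f(x)\cdot v=0$. -/
open Set

section aux
variable {E : Type*} [NormedAddCommGroup E] [NormedSpace ℝ E]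

lemma curve_deriv1 {f : E → ℝ} {γ : ℝ → E} {v : E} {t : ℝ}
    (hγ : HasDerivAt γ v t) (hd : DifferentiableAt ℝ f (γ t)) :
    HasDerivAt (fun s => f (γ s)) (fderiv ℝ f (γ t) v) t :=
  hd.hasFDerivAt.comp_hasDerivAt t hγ

lemma curve_deriv2 {f : E → ℝ} {γ : ℝ → E} {v : E} {w : ℝ → E} {w' : E} {t : ℝ}
    (hγ : HasDerivAt γ v t) (hd : DifferentiableAt ℝ (fderiv ℝ f) (γ t))
    (hw : HasDerivAt w w' t) :
    HasDerivAt (fun s => fderiv ℝ f (γ s) (w s))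
      (fderiv ℝ (fderiv ℝ f) (γ t) v (w t) + fderiv ℝ f (γ t) w') t := by
  have h1 : HasDerivAt (fun s => fderiv ℝ f (γ s)) (fderiv ℝ (fderiv ℝ f) (γ t) v) t :=
    hd.hasFDerivAt.comp_hasDerivAt t hγ
  exact h1.clm_apply hw

lemma line_hasDerivAt (x v : E) (t : ℝ) : HasDerivAt (fun s : ℝ => x + s • v) v t := by
  simpa using ((hasDerivAt_id t).smul_const v).const_add x

lemma local_const {U : Set E} (hU : IsOpen U)
    {f : E → ℝ} (hf : ContDiffOn ℝ 2 f U)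
    (hq : ∀ x ∈ U, ∀ v : E, fderiv ℝ f x v = 0 → fderiv ℝ (fderiv ℝ f) x v v ≤ 0)
    {z : E} (hz : z ∈ U) (hDfz : fderiv ℝ f z ≠ 0) {d : E} (hzd : fderiv ℝ f z d = 0)
    (hloc : ∀ᶠ t in nhds (0:ℝ), f z ≤ f (z + t • d)) :
    ∀ᶠ t in nhds (0:ℝ), f (z + t • d) = f z := by
  have hf' : ContDiffOn ℝ 1 (fderiv ℝ f) U := hf.fderiv_of_isOpen hU (by norm_num)
  have hfd : ∀ u ∈ U, DifferentiableAt ℝ f u := fun u hu =>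
    ((hf.differentiableOn (by norm_num)) u hu).differentiableAt (hU.mem_nhds hu)
  have hfd2 : ∀ u ∈ U, DifferentiableAt ℝ (fderiv ℝ f) u := fun u hu =>
    ((hf'.differentiableOn (by norm_num)) u hu).differentiableAt (hU.mem_nhds hu)
  have hf'c : ContinuousOn (fderiv ℝ f) U := hf'.continuousOn
  -- a vector p with (fderiv f z) p = 1
  obtain ⟨w, hw⟩ : ∃ w, fderiv ℝ f z w ≠ 0 := by
    by_contra h
    push_neg at h
    exact hDfz (ContinuousLinearMap.ext fun u => by simp [h u])
  set p : E := (fderiv ℝ f z w)⁻¹ • w with hp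
  have hφp : fderiv ℝ f z p = 1 := by
    rw [hp, map_smul, smul_eq_mul, inv_mul_cancel₀ hw]
  -- the affine chart A and the map Φ
  set A : ℝ × ℝ → E := fun q => z + (q.1 • d + q.2 • p) with hA
  set ℓ : ℝ × ℝ →L[ℝ] E :=
    (ContinuousLinearMap.fst ℝ ℝ ℝ).smulRight d + (ContinuousLinearMap.snd ℝ ℝ ℝ).smulRight p
    with hℓ
  have hℓa : ∀ q : ℝ × ℝ, ℓ q = q.1 • d + q.2 • p := fun q => by
    simp [hℓ]
  have hAeq : A = fun q => z + ℓ q := by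
    funext q; rw [hA]; simp [hℓa]
  have hAcd : ContDiff ℝ 2 A := by
    rw [hAeq]; exact contDiff_const.add ℓ.contDiff
  have hAF : ∀ q, HasFDerivAt A ℓ q := fun q => by
    rw [hAeq]
    simpa using ℓ.hasFDerivAt
  have hAc : Continuous A := hAcd.continuous
  have hA00 : A (0, 0) = z := by simp [hA]
  set Φ : ℝ × ℝ → ℝ × ℝ := fun q => (q.1, f (A q)) with hΦ
  have hfz : HasFDerivAt f (fderiv ℝ f z) z := (hfd z hz).hasFDerivAt
  have hΦcd : ContDiffAt ℝ 2 Φ (0, 0) := by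
    apply ContDiffAt.prodMk contDiffAt_fst
    have h1 : ContDiffAt ℝ 2 f (A (0, 0)) := by
      rw [hA00]; exact hf.contDiffAt (hU.mem_nhds hz)
    exact h1.comp _ hAcd.contDiffAt
  have hΦ' : HasFDerivAt Φ
      (ContinuousLinearEquiv.refl ℝ (ℝ × ℝ) :
        ℝ × ℝ →L[ℝ] ℝ × ℝ) (0, 0) := by
    have h2' : HasFDerivAt f (fderiv ℝ f z) (A (0, 0)) := by rw [hA00]; exact hfz
    have h2 : HasFDerivAt (fun q => f (A q)) ((fderiv ℝ f z).comp ℓ) (0, 0) :=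
      h2'.comp (0, 0) (hAF (0, 0))
    have h3 : HasFDerivAt Φ
        ((ContinuousLinearMap.fst ℝ ℝ ℝ).prod ((fderiv ℝ f z).comp ℓ)) (0, 0) :=
      hasFDerivAt_fst.prodMk h2
    convert h3 using 1
    apply ContinuousLinearMap.ext
    rintro ⟨u, v⟩
    refine Prod.ext ?_ ?_
    · simp
    · simp [hℓa, hzd, hφp]
  have hn2 : (1 : WithTop ℕ∞) ≤ 2 := by norm_num
  have hS : HasStrictFDerivAt Φ
      (ContinuousLinearEquiv.refl ℝ (ℝ × ℝ) :
        ℝ × ℝ →L[ℝ] ℝ × ℝ) (0, 0) := hΦcd.hasStrictFDerivAt' hΦ' (by norm_num)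
  set Ψ : ℝ × ℝ → ℝ × ℝ := hΦcd.localInverse hΦ' (by norm_num) with hΨdef
  have hΨcd : ContDiffAt ℝ 2 Ψ (Φ (0, 0)) := hΦcd.to_localInverse hΦ' (by norm_num)
  have hΨS : Ψ = hS.localInverse Φ _ (0, 0) := rfl
  have hΦ00 : Φ (0, 0) = (0, f z) := by simp only [hΦ]; rw [hA00]
  have hleft : Ψ (0, f z) = (0, 0) := by
    have h := hS.localInverse_apply_image
    rw [hΦ00] at h
    rw [hΨS]; exact h
  have hright : ∀ᶠ y in nhds (Φ (0, 0)), Φ (Ψ y) = y := by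
    rw [hΨS]; exact hS.eventually_right_inverse
  set σ : ℝ → ℝ := fun t => (Ψ (t, f z)).2 with hσdef
  have hσ0 : σ 0 = 0 := by rw [hσdef]; simp only; rw [hleft]
  have hmap : Filter.Tendsto (fun t : ℝ => ((t, f z) : ℝ × ℝ)) (nhds 0) (nhds (Φ (0, 0))) := by
    rw [hΦ00]
    exact (continuous_id.prodMk continuous_const).continuousAt
  have hidt : ∀ᶠ t in nhds (0 : ℝ), Φ (Ψ (t, f z)) = (t, f z) := hmap.eventually hright
  have hkey : ∀ᶠ t in nhds (0 : ℝ), f (A (t, σ t)) = f z := by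
    filter_upwards [hidt] with t h
    have h1 : (Ψ (t, f z)).1 = t := congrArg Prod.fst h
    have h2 : f (A (Ψ (t, f z))) = f z := congrArg Prod.snd h
    have h3 : A (t, σ t) = A (Ψ (t, f z)) := by
      rw [hσdef]; simp only
      conv_rhs => rw [← Prod.mk.eta (p := Ψ (t, f z))]
      rw [h1]
    rw [h3, h2]
  have hσcd : ContDiffAt ℝ 2 σ 0 := by
    have h1 : ContDiffAt ℝ 2 (fun t : ℝ => ((t, f z) : ℝ × ℝ)) 0 :=
      contDiffAt_id.prodMk contDiffAt_const
    have h2 : ContDiffAt ℝ 2 Ψ ((fun t : ℝ => ((t, f z) : ℝ × ℝ)) 0) := by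
      simp only
      rw [← hΦ00]; exact hΨcd
    exact contDiffAt_snd.comp (0:ℝ) (h2.comp (0:ℝ) h1)
  -- radius r : points A q in U with derivative in direction p bounded below
  have hball : ∀ᶠ q : ℝ × ℝ in nhds ((0:ℝ), (0:ℝ)),
      A q ∈ U ∧ (1/2 : ℝ) < fderiv ℝ f (A q) p := by
    have hAc0 : ContinuousAt A (0, 0) := hAc.continuousAt
    have hAU : ∀ᶠ q : ℝ × ℝ in nhds ((0:ℝ), (0:ℝ)), A q ∈ U := by
      have hm : U ∈ nhds (A (0, 0)) := by rw [hA00]; exact hU.mem_nhds hz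
      exact hAc0.preimage_mem_nhds hm
    have hc2 : Filter.Tendsto (fun q : ℝ × ℝ => fderiv ℝ f (A q) p)
        (nhds (0, 0)) (nhds 1) := by
      have h1 : ContinuousAt (fderiv ℝ f) (A (0, 0)) := by
        rw [hA00]; exact hf'c.continuousAt (hU.mem_nhds hz)
      have h2 : ContinuousAt (fun q : ℝ × ℝ => fderiv ℝ f (A q)) (0, 0) := h1.comp hAc0
      have h3 : ContinuousAt (fun q : ℝ × ℝ => fderiv ℝ f (A q) p) (0, 0) :=
        ((ContinuousLinearMap.apply ℝ ℝ p).continuous.continuousAt).comp h2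
      have h4 : fderiv ℝ f (A (0, 0)) p = 1 := by rw [hA00, hφp]
      rw [show (1:ℝ) = fderiv ℝ f (A (0,0)) p from h4.symm]
      exact h3
    have hgt := hc2.eventually (eventually_gt_nhds (by norm_num : (1/2:ℝ) < 1))
    filter_upwards [hAU, hgt] with q h1 h2
    exact ⟨h1, h2⟩
  obtain ⟨r, hr, hrs⟩ := Metric.eventually_nhds_iff.1 hball
  have hrcond : ∀ t s : ℝ, |t| < r/2 → |s| < r/2 →
      A (t, s) ∈ U ∧ (1/2 : ℝ) < fderiv ℝ f (A (t, s)) p := by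
    intro t s ht hs
    apply hrs
    rw [Prod.dist_eq]
    apply max_lt
    · rw [Real.dist_eq]; simp only [sub_zero]; linarith
    · rw [Real.dist_eq]; simp only [sub_zero]; linarith
  -- the neighborhood u on which σ is C²
  obtain ⟨uset, hu_nhds, hσOn⟩ := hσcd.contDiffOn le_rfl (by simp)
  -- collect all eventual conditions
  have hσcont : Filter.Tendsto σ (nhds 0) (nhds 0) := by
    have := hσcd.continuousAt
    rwa [ContinuousAt, hσ0] at this
  have hσsmall : ∀ᶠ t in nhds (0:ℝ), |σ t| < r/2 := by
    have := hσcont (Metric.ball_mem_nhds (0:ℝ) (by linarith : (0:ℝ) < r/2))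
    filter_upwards [this] with t ht
    simpa [Real.dist_eq] using ht
  have htsmall : ∀ᶠ t in nhds (0:ℝ), |t| < r/2 := by
    filter_upwards [Metric.ball_mem_nhds (0:ℝ) (by linarith : (0:ℝ) < r/2)] with t ht
    simpa [Real.dist_eq] using ht
  have hAt0 : ∀ t : ℝ, A (t, 0) = z + t • d := by intro t; simp [hA]
  have huev : ∀ᶠ t in nhds (0:ℝ), t ∈ uset := hu_nhds
  have hallev : ∀ᶠ t in nhds (0:ℝ), t ∈ uset ∧ |t| < r/2 ∧ |σ t| < r/2 ∧
      f z ≤ f (A (t, 0)) ∧ f (A (t, σ t)) = f z := by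
    filter_upwards [huev, htsmall, hσsmall, hloc, hkey] with t h1 h2 h3 h4 h5
    exact ⟨h1, h2, h3, by rwa [hAt0], h5⟩
  obtain ⟨η, hη, hIall⟩ := Metric.eventually_nhds_iff.1 hallev
  set I : Set ℝ := Ioo (-η) η with hI
  have hIo : IsOpen I := isOpen_Ioo
  have h0I : (0:ℝ) ∈ I := by constructor <;> simp [hη]
  have hmemI : ∀ t ∈ I, t ∈ uset ∧ |t| < r/2 ∧ |σ t| < r/2 ∧
      f z ≤ f (A (t, 0)) ∧ f (A (t, σ t)) = f z := by
    intro t ht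
    apply hIall
    rw [Real.dist_eq, sub_zero, abs_lt]
    exact ⟨ht.1, ht.2⟩
  have hγU : ∀ t ∈ I, A (t, σ t) ∈ U := fun t ht =>
    (hrcond t (σ t) (hmemI t ht).2.1 (hmemI t ht).2.2.1).1
  have hγp : ∀ t ∈ I, (1/2 : ℝ) < fderiv ℝ f (A (t, σ t)) p := fun t ht =>
    (hrcond t (σ t) (hmemI t ht).2.1 (hmemI t ht).2.2.1).2
  -- σ is C² on I
  have hσI : ContDiffOn ℝ 2 σ I := hσOn.mono (fun t ht => (hmemI t ht).1)
  have hσdiff : ∀ t ∈ I, HasDerivAt σ (deriv σ t) t := fun t ht =>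
    (((hσI.differentiableOn (by norm_num)) t ht).differentiableAt
      (hIo.mem_nhds ht)).hasDerivAt
  have hσ'I : ContDiffOn ℝ 1 (deriv σ) I := hσI.deriv_of_isOpen hIo (by norm_num)
  have hσ'diff : ∀ t ∈ I, HasDerivAt (deriv σ) (deriv (deriv σ) t) t := fun t ht =>
    (((hσ'I.differentiableOn (by norm_num)) t ht).differentiableAt
      (hIo.mem_nhds ht)).hasDerivAt
  have hσ'cont : ContinuousOn (deriv σ) I := hσ'I.continuousOn
  -- derivative of the curve t ↦ A (t, σ t)
  have hγd : ∀ t ∈ I, HasDerivAt (fun u => A (u, σ u)) (d + deriv σ t • p) t := by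
    intro t ht
    have h1 : HasDerivAt (fun u : ℝ => u • d) d t := by
      simpa using (hasDerivAt_id t).smul_const d
    have h2 : HasDerivAt (fun u => σ u • p) (deriv σ t • p) t := (hσdiff t ht).smul_const p
    have h3 := (h1.add h2).const_add z
    simp only [hA]
    exact h3
  -- first-order identity : the direction d + σ' t • p is tangent to the level set
  have horth : ∀ t ∈ I, fderiv ℝ f (A (t, σ t)) (d + deriv σ t • p) = 0 := by
    intro t ht
    have hcurve : HasDerivAt (fun u => f (A (u, σ u)))
        (fderiv ℝ f (A (t, σ t)) (d + deriv σ t • p)) t :=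
      curve_deriv1 (hγd t ht) (hfd _ (hγU t ht))
    have hev : (fun u => f (A (u, σ u))) =ᶠ[nhds t] fun _ => f z := by
      filter_upwards [hIo.mem_nhds ht] with u hu
      exact (hmemI u hu).2.2.2.2
    have hconst : HasDerivAt (fun u => f (A (u, σ u))) 0 t :=
      (hasDerivAt_const t (f z)).congr_of_eventuallyEq hev
    exact hcurve.unique hconst
  have hσ'0 : deriv σ 0 = 0 := by
    have h := horth 0 h0I
    rw [hσ0] at h
    have hA0 : A (0, σ 0) = z := by rw [hσ0, hA00]
    rw [hσ0] at hA0
    rw [hA0, map_add, hzd, map_smul, hφp, smul_eq_mul] at h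
    linarith
  -- second-order inequality : σ'' ≥ 0 on I
  have hσ'' : ∀ t ∈ I, 0 ≤ deriv (deriv σ) t := by
    intro t ht
    have hw2 : HasDerivAt (fun u => d + deriv σ u • p) (deriv (deriv σ) t • p) t :=
      ((hσ'diff t ht).smul_const p).const_add d
    have hder := curve_deriv2 (f := f) (hγd t ht) (hfd2 _ (hγU t ht)) hw2
    have hev : (fun u => fderiv ℝ f (A (u, σ u)) (d + deriv σ u • p))
        =ᶠ[nhds t] fun _ => (0:ℝ) := by
      filter_upwards [hIo.mem_nhds ht] with u hu
      exact horth u hu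
    have hconst : HasDerivAt (fun u => fderiv ℝ f (A (u, σ u)) (d + deriv σ u • p)) 0 t :=
      (hasDerivAt_const t (0:ℝ)).congr_of_eventuallyEq hev
    have h0 := hder.unique hconst
    rw [map_smul, smul_eq_mul] at h0
    have hD2 := hq _ (hγU t ht) _ (horth t ht)
    have hp2 := hγp t ht
    by_contra hneg
    push_neg at hneg
    have hmul : deriv (deriv σ) t * fderiv ℝ f (A (t, σ t)) p < 0 :=
      mul_neg_of_neg_of_pos hneg (lt_trans (by norm_num) hp2)
    linarith
  -- deriv σ is monotone on I, hence σ ≥ 0 on I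
  have hσ'mono : MonotoneOn (deriv σ) I := by
    apply monotoneOn_of_deriv_nonneg (convex_Ioo _ _) hσ'cont
    · intro t ht
      rw [interior_Ioo] at ht
      exact ((hσ'diff t ht).differentiableAt).differentiableWithinAt
    · intro t ht
      rw [interior_Ioo] at ht
      exact hσ'' t ht
  have hIccI : ∀ a b : ℝ, a ∈ I → b ∈ I → Icc a b ⊆ I := by
    intro a b ha hb t ht
    exact ⟨lt_of_lt_of_le ha.1 ht.1, lt_of_le_of_lt ht.2 hb.2⟩
  have hσcI : ContinuousOn σ I := hσI.continuousOn
  have hσnonneg : ∀ t ∈ I, 0 ≤ σ t := by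
    intro t ht
    rcases le_or_gt 0 t with h0t | h0t
    · have hmono : MonotoneOn σ (Icc 0 t) := by
        apply monotoneOn_of_deriv_nonneg (convex_Icc _ _)
          (hσcI.mono (hIccI _ _ h0I ht))
        · intro u hu
          rw [interior_Icc] at hu
          exact ((hσdiff u (hIccI _ _ h0I ht ⟨le_of_lt hu.1, le_of_lt hu.2⟩)).differentiableAt).differentiableWithinAt
        · intro u hu
          rw [interior_Icc] at hu
          have huI : u ∈ I := hIccI _ _ h0I ht ⟨le_of_lt hu.1, le_of_lt hu.2⟩
          have := hσ'mono h0I huI (le_of_lt hu.1)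
          rwa [hσ'0] at this
      have := hmono (left_mem_Icc.2 h0t) (right_mem_Icc.2 h0t) h0t
      rwa [hσ0] at this
    · have hanti : AntitoneOn σ (Icc t 0) := by
        apply antitoneOn_of_deriv_nonpos (convex_Icc _ _)
          (hσcI.mono (hIccI _ _ ht h0I))
        · intro u hu
          rw [interior_Icc] at hu
          exact ((hσdiff u (hIccI _ _ ht h0I ⟨le_of_lt hu.1, le_of_lt hu.2⟩)).differentiableAt).differentiableWithinAt
        · intro u hu
          rw [interior_Icc] at hu
          have huI : u ∈ I := hIccI _ _ ht h0I ⟨le_of_lt hu.1, le_of_lt hu.2⟩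
          have := hσ'mono huI h0I (le_of_lt hu.2)
          rwa [hσ'0] at this
      have := hanti (left_mem_Icc.2 (le_of_lt h0t)) (right_mem_Icc.2 (le_of_lt h0t)) (le_of_lt h0t)
      rwa [hσ0] at this
  -- σ ≤ 0 on I, via strict monotonicity of f in the direction p
  have hσnonpos : ∀ t ∈ I, σ t ≤ 0 := by
    intro t ht
    by_contra hcon
    push_neg at hcon
    have hsmem : ∀ s : ℝ, s ∈ Icc 0 (σ t) → A (t, s) ∈ U ∧
        (1/2 : ℝ) < fderiv ℝ f (A (t, s)) p := by
      intro s hs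
      apply hrcond t s (hmemI t ht).2.1
      rw [abs_lt]
      constructor
      · linarith [hs.1]
      · have := (hmemI t ht).2.2.1
        rw [abs_lt] at this
        linarith [hs.2, this.2]
    have hsder : ∀ s : ℝ, A (t, s) ∈ U →
        HasDerivAt (fun s' => f (A (t, s'))) (fderiv ℝ f (A (t, s)) p) s := by
      intro s hsU
      have hcurve : HasDerivAt (fun s' : ℝ => A (t, s')) p s := by
        have h1 : HasDerivAt (fun s' : ℝ => s' • p) p s := by
          simpa using (hasDerivAt_id s).smul_const p
        have h2 := (h1.const_add (t • d)).const_add z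
        simp only [hA]
        exact h2
      exact curve_deriv1 hcurve (hfd _ hsU)
    have hmono : StrictMonoOn (fun s => f (A (t, s))) (Icc 0 (σ t)) := by
      apply strictMonoOn_of_deriv_pos (convex_Icc _ _)
      · intro s hs
        have c1 : ContinuousAt (fun s' : ℝ => ((t, s') : ℝ × ℝ)) s :=
          (continuous_const.prodMk continuous_id).continuousAt
        have c2 : ContinuousAt A (t, s) := hAc.continuousAt
        have c3 : ContinuousAt f (A (t, s)) := (hfd _ (hsmem s hs).1).continuousAt
        exact ((c3.comp c2).comp c1).continuousWithinAt
      · intro s hs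
        rw [interior_Icc] at hs
        have hs' : s ∈ Icc 0 (σ t) := ⟨le_of_lt hs.1, le_of_lt hs.2⟩
        rw [(hsder s (hsmem s hs').1).deriv]
        linarith [(hsmem s hs').2]
    have h1 := hmono (left_mem_Icc.2 (le_of_lt hcon)) (right_mem_Icc.2 (le_of_lt hcon)) hcon
    have h2 := (hmemI t ht).2.2.2.1
    have h3 := (hmemI t ht).2.2.2.2
    simp only at h1
    rw [h3] at h1
    linarith
  -- conclusion
  filter_upwards [hIo.mem_nhds h0I] with t ht
  have hzero : σ t = 0 := le_antisymm (hσnonpos t ht) (hσnonneg t ht)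
  have h3 := (hmemI t ht).2.2.2.2
  rw [hzero] at h3
  rw [← hAt0 t]
  exact h3
lemma backward_dir {U : Set E} (hU : IsOpen U) (hUc : Convex ℝ U)
    {f : E → ℝ} (hf : ContDiffOn ℝ 2 f U)
    (hDf : ∀ x ∈ U, fderiv ℝ f x ≠ 0)
    (hq : ∀ x ∈ U, ∀ v : E, fderiv ℝ f x v = 0 → fderiv ℝ (fderiv ℝ f) x v v ≤ 0)
    {x : E} (hx : x ∈ U) {y : E} (hy : y ∈ U) {t : ℝ} (ht : t ∈ Icc (0:ℝ) 1) :
    min (f x) (f y) ≤ f ((1 - t) • x + t • y) := by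
  by_contra hlt
  push_neg at hlt
  set d : E := y - x with hd
  set g : ℝ → ℝ := fun s => f (x + s • d) with hg
  have hcomb : ∀ s : ℝ, x + s • d = (1 - s) • x + s • y := by
    intro s; rw [hd]; module
  have hseg : ∀ s ∈ Icc (0:ℝ) 1, x + s • d ∈ U := by
    intro s hs
    rw [hcomb]
    exact hUc hx hy (by linarith [hs.2]) hs.1 (by ring)
  have hg0 : g 0 = f x := by simp [hg]
  have hg1 : g 1 = f y := by rw [hg]; simp only; rw [hcomb]; norm_num
  have hgt : g t < min (f x) (f y) := by rw [hg]; simp only; rw [hcomb]; exact hlt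
  have hfd : ∀ u ∈ U, DifferentiableAt ℝ f u := fun u hu =>
    ((hf.differentiableOn (by norm_num)) u hu).differentiableAt (hU.mem_nhds hu)
  have hlinec : ∀ s : ℝ, ContinuousAt (fun s' : ℝ => x + s' • d) s := by
    intro s
    exact (continuous_const.add (continuous_id.smul continuous_const)).continuousAt
  have hgc : ContinuousOn g (Icc 0 1) := by
    intro s hs
    have h1 : ContinuousAt f (x + s • d) := (hfd _ (hseg s hs)).continuousAt
    have h2 := ContinuousAt.comp (f := fun s' : ℝ => x + s' • d) (x := s) h1 (hlinec s)
    exact h2.continuousWithinAt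
  obtain ⟨t0, ht0mem, ht0min⟩ :=
    isCompact_Icc.exists_isMinOn (nonempty_Icc.2 zero_le_one) hgc
  have hmin : ∀ s ∈ Icc (0:ℝ) 1, g t0 ≤ g s := fun s hs => ht0min hs
  have hm_lt : g t0 < min (f x) (f y) := lt_of_le_of_lt (hmin t ht) hgt
  have ht01 : t0 < 1 := by
    rcases lt_or_eq_of_le ht0mem.2 with h | h
    · exact h
    · exfalso
      rw [h, hg1] at hm_lt
      exact absurd hm_lt (not_lt.2 (min_le_right _ _))
  set T : Set ℝ := Icc 0 t0 ∩ g ⁻¹' {g t0} with hT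
  have hTne : T.Nonempty := ⟨t0, ⟨ht0mem.1, le_rfl⟩, rfl⟩
  have hTbdd : BddBelow T := ⟨0, fun s hs => hs.1.1⟩
  have hTclosed : IsClosed T := by
    apply (hgc.mono (Icc_subset_Icc le_rfl ht0mem.2)).preimage_isClosed_of_isClosed
      isClosed_Icc isClosed_singleton
  set a : ℝ := sInf T with haDef
  have haT : a ∈ T := hTclosed.csInf_mem hTne hTbdd
  have hga : g a = g t0 := haT.2
  have ha0 : 0 < a := by
    rcases lt_or_eq_of_le haT.1.1 with h | h
    · exact h
    · exfalso
      rw [← h, hg0] at hga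
      rw [← hga] at hm_lt
      exact absurd hm_lt (not_lt.2 (min_le_left _ _))
  have ha1 : a < 1 := lt_of_le_of_lt haT.1.2 ht01
  have haU : x + a • d ∈ U := hseg a ⟨le_of_lt ha0, le_of_lt ha1⟩
  set z : E := x + a • d with hz
  have hshift : ∀ u : ℝ, z + u • d = x + (a + u) • d := by
    intro u; rw [hz]; module
  have hlocmin : IsLocalMin g a := by
    have hIccnhds : Icc (0:ℝ) 1 ∈ nhds a := Icc_mem_nhds ha0 ha1
    filter_upwards [hIccnhds] with s hs
    rw [hga]
    exact hmin s hs
  have hgd : HasDerivAt g (fderiv ℝ f z d) a := by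
    have := curve_deriv1 (f := f) (line_hasDerivAt x d a) (hfd _ haU)
    exact this
  have hzd : fderiv ℝ f z d = 0 := hlocmin.hasDerivAt_eq_zero hgd
  have hloc : ∀ᶠ u in nhds (0:ℝ), f z ≤ f (z + u • d) := by
    have htend : Filter.Tendsto (fun u : ℝ => a + u) (nhds 0) (nhds a) := by
      simpa using (tendsto_const_nhds (x := a)).add (Filter.tendsto_id (x := nhds (0:ℝ)))
    have hev := htend.eventually (isOpen_Ioo.eventually_mem (⟨ha0, ha1⟩ : a ∈ Ioo (0:ℝ) 1))
    filter_upwards [hev] with u hu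
    have h1 : f (z + u • d) = g (a + u) := by rw [hshift u]
    have h2 : f z = g a := rfl
    rw [h1, h2, hga]
    exact hmin _ ⟨le_of_lt hu.1, le_of_lt hu.2⟩
  have hconc := local_const hU hf hq haU (hDf z haU) hzd hloc
  obtain ⟨η, hη, hηs⟩ := Metric.eventually_nhds_iff.1 hconc
  set s1 : ℝ := max (a/2) (a - η/2) with hs1
  have hs1a : s1 < a := by
    apply max_lt
    · linarith
    · linarith
  have hs1nonneg : 0 ≤ s1 := le_trans (by linarith) (le_max_left _ _)
  have hs1T : s1 ∈ T := by
    constructor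
    · exact ⟨hs1nonneg, le_trans (le_of_lt hs1a) haT.1.2⟩
    · have hu : dist (s1 - a) (0:ℝ) < η := by
        rw [Real.dist_eq, sub_zero, abs_lt]
        constructor
        · have : a - η/2 ≤ s1 := le_max_right _ _
          linarith
        · linarith
      have := hηs hu
      rw [hshift (s1 - a)] at this
      rw [show a + (s1 - a) = s1 by ring] at this
      have h2 : f z = g a := rfl
      show g s1 = g t0
      rw [show g s1 = f (x + s1 • d) from rfl] at *
      rw [this, h2, hga]
  have := csInf_le hTbdd hs1T
  rw [← haDef] at this
  linarith

lemma forward_dir {U : Set E} (hU : IsOpen U)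
    {f : E → ℝ} (hf : ContDiffOn ℝ 2 f U)
    (hq : ∀ x ∈ U, ∀ y ∈ U, ∀ t ∈ Icc (0:ℝ) 1, min (f x) (f y) ≤ f ((1 - t) • x + t • y))
    {x : E} (hx : x ∈ U) (v : E) (hv : fderiv ℝ f x v = 0) :
    fderiv ℝ (fderiv ℝ f) x v v ≤ 0 := by
  by_contra hpos
  push_neg at hpos
  set c := fderiv ℝ (fderiv ℝ f) x v v with hc
  have hf' : ContDiffOn ℝ 1 (fderiv ℝ f) U := hf.fderiv_of_isOpen hU (by norm_num)
  have hfd : ∀ z ∈ U, DifferentiableAt ℝ f z := fun z hz =>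
    ((hf.differentiableOn (by norm_num)) z hz).differentiableAt (hU.mem_nhds hz)
  have hfd2 : ∀ z ∈ U, DifferentiableAt ℝ (fderiv ℝ f) z := fun z hz =>
    ((hf'.differentiableOn (by norm_num)) z hz).differentiableAt (hU.mem_nhds hz)
  set L : ℝ → E := fun s => x + s • v with hL
  have hL0 : L 0 = x := by simp [hL]
  have hLc : Continuous L := by continuity
  -- a radius ε₀ with L t ∈ U for |t| < ε₀
  have hopen : IsOpen (L ⁻¹' U) := hU.preimage hLc
  have h0mem : (0:ℝ) ∈ L ⁻¹' U := by simp [hL0, hx]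
  obtain ⟨ε₀, hε₀, hball⟩ := Metric.isOpen_iff.1 hopen 0 h0mem
  have hmemU : ∀ t : ℝ, |t| < ε₀ → L t ∈ U := by
    intro t ht
    exact hball (by simpa [Real.dist_eq] using ht)
  set G : ℝ → ℝ := fun t => fderiv ℝ f (L t) v with hG
  have hG0 : G 0 = 0 := by simp [hG, hL0, hv]
  have hGd : ∀ t : ℝ, L t ∈ U → HasDerivAt G (fderiv ℝ (fderiv ℝ f) (L t) v v) t := by
    intro t ht
    have := curve_deriv2 (f := f) (line_hasDerivAt x v t) (hfd2 _ ht) (hasDerivAt_const t v)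
    simpa [hG] using this
  have hGd0 : HasDerivAt G c 0 := by
    have := hGd 0 (by simpa [hL0] using hx)
    simpa [hL0] using this
  -- sign of G near 0
  have hslope : Filter.Tendsto (slope G 0) (nhdsWithin 0 {(0:ℝ)}ᶜ) (nhds c) :=
    hasDerivAt_iff_tendsto_slope.1 hGd0
  have hev : ∀ᶠ t in nhdsWithin 0 {(0:ℝ)}ᶜ, 0 < slope G 0 t :=
    hslope.eventually (eventually_gt_nhds hpos)
  have hev' : ∀ᶠ t in nhds (0:ℝ), t ≠ 0 → 0 < slope G 0 t := eventually_nhdsWithin_iff.1 hev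
  obtain ⟨δ, hδ, hδs⟩ := Metric.eventually_nhds_iff.1 hev'
  have hsign : ∀ t : ℝ, t ≠ 0 → |t| < δ → 0 < G t / t := by
    intro t ht htδ
    have := hδs (y := t) (by simpa [Real.dist_eq] using htδ) ht
    simpa [slope_def_field, hG0] using this
  obtain ⟨ε, hε, hεδ, hεε₀⟩ : ∃ ε : ℝ, 0 < ε ∧ ε < δ ∧ ε < ε₀ := by
    refine ⟨min δ ε₀ / 2, by positivity, ?_, ?_⟩
    · nlinarith [min_le_left δ ε₀, lt_min hδ hε₀]
    · nlinarith [min_le_right δ ε₀, lt_min hδ hε₀]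
  have hIccU : ∀ t : ℝ, t ∈ Icc (-ε) ε → L t ∈ U := by
    intro t ht
    exact hmemU t (by rw [abs_lt]; exact ⟨by linarith [ht.1], by linarith [ht.2]⟩)
  have hgc : ContinuousOn (fun t => f (L t)) (Icc (-ε) ε) := by
    intro t ht
    exact ((hfd _ (hIccU t ht)).continuousAt.comp hLc.continuousAt).continuousWithinAt
  have hgderiv : ∀ t : ℝ, L t ∈ U → HasDerivAt (fun s => f (L s)) (G t) t := by
    intro t ht
    exact curve_deriv1 (line_hasDerivAt x v t) (hfd _ ht)
  -- strictly increasing on [0, ε]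
  have hmono : StrictMonoOn (fun t => f (L t)) (Icc 0 ε) := by
    apply strictMonoOn_of_deriv_pos (convex_Icc 0 ε)
    · exact hgc.mono (Icc_subset_Icc (by linarith) le_rfl)
    · intro t ht
      rw [interior_Icc] at ht
      have htU : L t ∈ U := hIccU t ⟨by linarith [ht.1], le_of_lt ht.2⟩
      rw [(hgderiv t htU).deriv]
      have := hsign t (ne_of_gt ht.1) (by rw [abs_of_pos ht.1]; linarith [ht.2])
      have h3 := mul_pos this ht.1
      rwa [div_mul_cancel₀ (G t) (ne_of_gt ht.1)] at h3
  have hanti : StrictAntiOn (fun t => f (L t)) (Icc (-ε) 0) := by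
    apply strictAntiOn_of_deriv_neg (convex_Icc (-ε) 0)
    · exact hgc.mono (Icc_subset_Icc le_rfl (by linarith))
    · intro t ht
      rw [interior_Icc] at ht
      have htU : L t ∈ U := hIccU t ⟨le_of_lt ht.1, by linarith [ht.2]⟩
      rw [(hgderiv t htU).deriv]
      have hs := hsign t (ne_of_lt ht.2) (by rw [abs_of_neg ht.2]; linarith [ht.1])
      by_contra hcon
      push_neg at hcon
      have : G t / t ≤ 0 := div_nonpos_of_nonneg_of_nonpos hcon (le_of_lt ht.2)
      linarith
  have h1 : f (L 0) < f (L ε) := by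
    have := hmono (left_mem_Icc.2 (le_of_lt hε)) (right_mem_Icc.2 (le_of_lt hε)) hε
    exact this
  have h2 : f (L 0) < f (L (-ε)) := by
    have := hanti (left_mem_Icc.2 (by linarith)) (right_mem_Icc.2 (by linarith)) (by linarith)
    exact this
  have hmid : (1 - (1/2 : ℝ)) • L (-ε) + (1/2 : ℝ) • L ε = x := by
    simp only [hL]
    module
  have := hq (L (-ε)) (hIccU _ (mem_Icc.2 ⟨le_rfl, by linarith⟩)) (L ε)
    (hIccU _ (mem_Icc.2 ⟨by linarith, le_rfl⟩)) (1/2) (mem_Icc.2 (by norm_num))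
  rw [hmid] at this
  rw [hL0] at h1 h2
  exact absurd this (not_le.2 (lt_min h2 h1))

end aux

theorem stmt_4 {n : ℕ} (U : Set (EuclideanSpace ℝ (Fin n)))
    (hU : IsOpen U) (hUc : Convex ℝ U)
    (f : EuclideanSpace ℝ (Fin n) → ℝ) (hf : ContDiffOn ℝ 2 f U)
    (hDf : ∀ x ∈ U, fderiv ℝ f x ≠ 0) :
    (∀ x ∈ U, ∀ y ∈ U, ∀ t ∈ Icc (0:ℝ) 1,
        min (f x) (f y) ≤ f ((1 - t) • x + t • y)) ↔
    (∀ x ∈ U, ∀ v : EuclideanSpace ℝ (Fin n),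
        fderiv ℝ f x v = 0 → fderiv ℝ (fderiv ℝ f) x v v ≤ 0) := by
  constructor
  · intro hq x hx v hv
    exact forward_dir hU hf hq hx v hv
  · intro hq x hx y hy t ht
    exact backward_dir hU hUc hf hDf hq hx hy ht
end

section
/- Let $U\subset\mathbb{R}^n$ be open and convex and $f:U\to\mathbb{R}$ be $C^2$. If for every $x\in U$, $\nabla f(x)\ne 0$ and $v^T D^2f(x)v<0$ for every $v\ne 0$ with $\nabla f(x)\cdot v=0$, then $f$ is strictly quasi-concave. -/
open Set Filter Topology

theorem stmt_5 {n : ℕ} (U : Set (EuclideanSpace ℝ (Fin n)))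
    (hU : IsOpen U) (hUc : Convex ℝ U)
    (f : EuclideanSpace ℝ (Fin n) → ℝ) (hf : ContDiffOn ℝ 2 f U)
    (hDf : ∀ x ∈ U, fderiv ℝ f x ≠ 0)
    (hsec : ∀ x ∈ U, ∀ v : EuclideanSpace ℝ (Fin n), v ≠ 0 →
        fderiv ℝ f x v = 0 → fderiv ℝ (fderiv ℝ f) x v v < 0) :
    ∀ x ∈ U, ∀ y ∈ U, x ≠ y → ∀ t ∈ Ioo (0:ℝ) 1,
      min (f x) (f y) < f ((1 - t) • x + t • y) := by
  intro x hx y hy hxy t ht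
  by_contra hcon
  push_neg at hcon
  set v : EuclideanSpace ℝ (Fin n) := y - x with hv
  have hvne : v ≠ 0 := sub_ne_zero.mpr (Ne.symm hxy)
  set γ : ℝ → EuclideanSpace ℝ (Fin n) := fun s => x + s • v with hγ
  have hγeq : ∀ s : ℝ, (1 - s) • x + s • y = γ s := by
    intro s; simp only [hγ, hv]; module
  have hγU : ∀ s ∈ Icc (0:ℝ) 1, γ s ∈ U := by
    intro s hs
    rw [← hγeq]
    exact hUc hx hy (by linarith [hs.2]) hs.1 (by ring)
  set g : ℝ → ℝ := fun s => f (γ s) with hg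
  have hγd : ∀ s : ℝ, HasDerivAt γ v s := by
    intro s
    have := ((hasDerivAt_id s).smul_const v).const_add x
    simp only [one_smul, id_eq] at this
    exact this
  have hfd : ∀ z ∈ U, HasFDerivAt f (fderiv ℝ f z) z := fun z hz =>
    ((hf.differentiableOn two_ne_zero z hz).differentiableAt (hU.mem_nhds hz)).hasFDerivAt
  have hf' : DifferentiableOn ℝ (fderiv ℝ f) U :=
    (hf.fderiv_of_isOpen (m := 1) hU (by norm_num)).differentiableOn one_ne_zero
  have hf'd : ∀ z ∈ U, HasFDerivAt (fderiv ℝ f) (fderiv ℝ (fderiv ℝ f) z) z := fun z hz =>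
    ((hf' z hz).differentiableAt (hU.mem_nhds hz)).hasFDerivAt
  have hgd : ∀ s ∈ Icc (0:ℝ) 1, HasDerivAt g (fderiv ℝ f (γ s) v) s := fun s hs =>
    (hfd _ (hγU s hs)).comp_hasDerivAt s (hγd s)
  set g' : ℝ → ℝ := fun s => fderiv ℝ f (γ s) v with hg'
  have hg'd : ∀ s ∈ Icc (0:ℝ) 1,
      HasDerivAt g' (fderiv ℝ (fderiv ℝ f) (γ s) v v) s := by
    intro s hs
    have h1 : HasDerivAt (fun s => fderiv ℝ f (γ s)) (fderiv ℝ (fderiv ℝ f) (γ s) v) s :=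
      (hf'd _ (hγU s hs)).comp_hasDerivAt s (hγd s)
    simpa using h1.clm_apply (hasDerivAt_const s v)
  have hgc : ContinuousOn g (Icc 0 1) := fun s hs =>
    ((hgd s hs).continuousAt).continuousWithinAt
  obtain ⟨c₀, hc₀, hmin₀⟩ :=
    isCompact_Icc.exists_isMinOn (nonempty_Icc.mpr zero_le_one) hgc
  have hg0 : g 0 = f x := by simp [hg, hγ]
  have hg1 : g 1 = f y := by simp [hg, hγ, hv]
  have hgt : g t = f ((1 - t) • x + t • y) := by rw [hγeq]
  have hkey : ∃ c ∈ Ioo (0:ℝ) 1, IsMinOn g (Icc 0 1) c := by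
    by_cases h : c₀ ∈ Ioo (0:ℝ) 1
    · exact ⟨c₀, h, hmin₀⟩
    · refine ⟨t, ht, fun s hs => ?_⟩
      have hc01 : c₀ = 0 ∨ c₀ = 1 := by
        rcases hc₀ with ⟨h0, h1⟩
        rcases eq_or_lt_of_le h0 with he | he
        · exact Or.inl he.symm
        rcases eq_or_lt_of_le h1 with he' | he'
        · exact Or.inr he'
        exact absurd ⟨he, he'⟩ h
      have hmc : min (g 0) (g 1) ≤ g c₀ := by
        rcases hc01 with h | h <;> rw [h]
        · exact min_le_left _ _
        · exact min_le_right _ _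
      have h1 : g t ≤ min (g 0) (g 1) := by
        rw [hg0, hg1, hgt]; exact hcon
      exact le_trans (le_trans h1 hmc) (hmin₀ hs)
  obtain ⟨c, hc, hmin⟩ := hkey
  have hcI : c ∈ Icc (0:ℝ) 1 := Ioo_subset_Icc_self hc
  have hzU := hγU c hcI
  have hloc : IsLocalMin g c := hmin.isLocalMin (Icc_mem_nhds hc.1 hc.2)
  have h0 : g' c = 0 := by
    have hd := hloc.deriv_eq_zero
    rwa [(hgd c hcI).deriv] at hd
  have hQ : fderiv ℝ (fderiv ℝ f) (γ c) v v < 0 := hsec _ hzU v hvne h0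
  have hslope : Tendsto (slope g' c) (𝓝[≠] c)
      (𝓝 (fderiv ℝ (fderiv ℝ f) (γ c) v v)) :=
    hasDerivAt_iff_tendsto_slope.mp (hg'd c hcI)
  have hev : ∀ᶠ s in 𝓝[>] c, g' s < 0 := by
    have h1 : Tendsto (slope g' c) (𝓝[>] c)
        (𝓝 (fderiv ℝ (fderiv ℝ f) (γ c) v v)) :=
      hslope.mono_left (nhdsWithin_mono c (fun s hs => ne_of_gt hs))
    have h2 : ∀ᶠ s in 𝓝[>] c, slope g' c s < 0 := h1.eventually_lt_const hQ
    filter_upwards [h2, self_mem_nhdsWithin] with s hs1 hs2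
    rw [slope_def_field, h0, sub_zero] at hs1
    have hsc : (0:ℝ) < s - c := sub_pos.mpr hs2
    rcases div_neg_iff.mp hs1 with ⟨_, h⟩ | ⟨h, _⟩
    · linarith
    · exact h
  obtain ⟨u, hu, hsub⟩ := mem_nhdsGT_iff_exists_Ioo_subset.mp hev
  set d := min u 1 with hd
  have hcd : c < d := lt_min hu hc.2
  have hIcc : Icc c d ⊆ Icc 0 1 := Icc_subset_Icc hc.1.le (min_le_right u 1)
  have hanti : StrictAntiOn g (Icc c d) := by
    refine strictAntiOn_of_deriv_neg (convex_Icc c d) (hgc.mono hIcc) (fun s hs => ?_)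
    rw [interior_Icc] at hs
    rw [(hgd s (hIcc (Ioo_subset_Icc_self hs))).deriv]
    exact hsub ⟨hs.1, lt_of_lt_of_le hs.2 (min_le_left u 1)⟩
  have hlt : g d < g c :=
    hanti (left_mem_Icc.mpr hcd.le) (right_mem_Icc.mpr hcd.le) hcd
  exact absurd (hmin (hIcc (right_mem_Icc.mpr hcd.le))) (not_le.mpr hlt)
end

section
/- The function $f(x_1,x_2)=x_1^3 x_2 + x_1 x_2^3$ on $U=\{(x_1,x_2): x_1>0,\ x_2>0\}$ is strictly quasi-concave, yet at the point $(1,1)$, the vector $v=(1,-1)$ satisfies $\nabla f(1,1)\cdot v=0$ and $v^T D^2f(1,1) v = 0$ (not $<0$). -/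
lemma cross3 (u1 v1 u2 v2 a b : ℝ) (C3pos : 0 < u1^3*u2 - v1^3*v2)
    (ha : 0 < a) (hb : 0 < b) (hA : a^4 = u1^4 - v1^4)
    (hc2 : a^2*b^2 ≤ u1^2*u2^2 - v1^2*v2^2) : a^3*b ≤ u1^3*u2 - v1^3*v2 := by
  have key3 : (u1^3*u2 - v1^3*v2)^2
      = a^4*(u1^2*u2^2 - v1^2*v2^2) + (v1*u1)^2*(u1*v2 - u2*v1)^2 := by
    linear_combination (-(u1^2*u2^2 - v1^2*v2^2)) * hA
  have habpos3 : 0 < a^3*b := by positivity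
  have hkey3' : a^4*(a^2*b^2) ≤ a^4*(u1^2*u2^2 - v1^2*v2^2) :=
    mul_le_mul_of_nonneg_left hc2 (by positivity)
  nlinarith [sq_nonneg ((v1*u1)*(u1*v2 - u2*v1))]

lemma cross3s (u1 v1 u2 v2 a b : ℝ) (C3pos : 0 < u1^3*u2 - v1^3*v2)
    (ha : 0 < a) (hb : 0 < b) (hA : a^4 = u1^4 - v1^4)
    (hc2 : a^2*b^2 ≤ u1^2*u2^2 - v1^2*v2^2)
    (hs : (v1*u1)*(u1*v2 - u2*v1) ≠ 0) : a^3*b < u1^3*u2 - v1^3*v2 := by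
  have key3 : (u1^3*u2 - v1^3*v2)^2
      = a^4*(u1^2*u2^2 - v1^2*v2^2) + (v1*u1)^2*(u1*v2 - u2*v1)^2 := by
    linear_combination (-(u1^2*u2^2 - v1^2*v2^2)) * hA
  have habpos3 : 0 < a^3*b := by positivity
  have hkey3' : a^4*(a^2*b^2) ≤ a^4*(u1^2*u2^2 - v1^2*v2^2) :=
    mul_le_mul_of_nonneg_left hc2 (by positivity)
  have hspos : 0 < ((v1*u1)*(u1*v2 - u2*v1))^2 :=
    lt_of_le_of_ne (sq_nonneg _) (Ne.symm (pow_ne_zero 2 hs))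
  nlinarith [hspos]

lemma superadd (u1 v1 u2 v2 a b : ℝ) (h1 : |v1| < u1) (h2 : |v2| < u2)
    (ha : 0 < a) (hb : 0 < b) (hA : a^4 = u1^4 - v1^4) (hB : b^4 = u2^4 - v2^4) :
    (a+b)^4 ≤ (u1+u2)^4 - (v1+v2)^4 ∧
      (u1*v2 ≠ u2*v1 → (a+b)^4 < (u1+u2)^4 - (v1+v2)^4) := by
  obtain ⟨h1a, h1b⟩ := abs_lt.mp h1
  obtain ⟨h2a, h2b⟩ := abs_lt.mp h2
  have hu1 : 0 < u1 := lt_of_le_of_lt (abs_nonneg v1) h1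
  have hu2 : 0 < u2 := lt_of_le_of_lt (abs_nonneg v2) h2
  have hv1 : v1^2 < u1^2 := by nlinarith
  have hv2 : v2^2 < u2^2 := by nlinarith
  -- C2
  have C2pos : 0 < u1^2*u2^2 - v1^2*v2^2 := by nlinarith [sq_nonneg v1, sq_nonneg v2]
  have key2 : (u1^2*u2^2 - v1^2*v2^2)^2 = (a^2*b^2)^2 + (u1^2*v2^2 - u2^2*v1^2)^2 := by
    linear_combination (-(b^4)) * hA + (-(u1^4 - v1^4)) * hB
  have habpos : 0 < a^2*b^2 := by positivity
  have hc2 : a^2*b^2 ≤ u1^2*u2^2 - v1^2*v2^2 := by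
    nlinarith [sq_nonneg (u1^2*v2^2 - u2^2*v1^2)]
  have hc2sym : b^2*a^2 ≤ u2^2*u1^2 - v2^2*v1^2 := by ring_nf; ring_nf at hc2; linarith
  -- C3
  have C3pos : 0 < u1^3*u2 - v1^3*v2 := by
    have e1 : |v1|^3 * |v2| < u1^3 * u2 :=
      mul_lt_mul'' (pow_lt_pow_left₀ h1 (abs_nonneg v1) three_ne_zero) h2 (by positivity) (abs_nonneg v2)
    have e2 : v1^3*v2 ≤ |v1|^3 * |v2| := by
      calc v1^3*v2 ≤ |v1^3*v2| := le_abs_self _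
      _ = |v1|^3 * |v2| := by rw [abs_mul, abs_pow]
    linarith
  have C1pos : 0 < u2^3*u1 - v2^3*v1 := by
    have e1 : |v2|^3 * |v1| < u2^3 * u1 :=
      mul_lt_mul'' (pow_lt_pow_left₀ h2 (abs_nonneg v2) three_ne_zero) h1 (by positivity) (abs_nonneg v1)
    have e2 : v2^3*v1 ≤ |v2|^3 * |v1| := by
      calc v2^3*v1 ≤ |v2^3*v1| := le_abs_self _
      _ = |v2|^3 * |v1| := by rw [abs_mul, abs_pow]
    linarith
  have hc3 := cross3 u1 v1 u2 v2 a b C3pos ha hb hA hc2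
  have hc1 := cross3 u2 v2 u1 v1 b a C1pos hb ha hB hc2sym
  have e1 : (u1+u2)^4 - (v1+v2)^4
      = (u1^4-v1^4)+(u2^4-v2^4)+4*(u1^3*u2-v1^3*v2)+6*(u1^2*u2^2-v1^2*v2^2)+4*(u2^3*u1-v2^3*v1) := by
    ring
  have e2 : (a+b)^4 = a^4+b^4+4*(a^3*b)+6*(a^2*b^2)+4*(b^3*a) := by ring
  constructor
  · linarith
  · intro hne
    by_cases hsq : u1^2*v2^2 = u2^2*v1^2
    · -- antiproportional: u1*v2 = -(u2*v1), v1 ≠ 0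
      have hsum : u1*v2 + u2*v1 = 0 := by
        have h0 : (u1*v2 - u2*v1) * (u1*v2 + u2*v1) = 0 := by linear_combination hsq
        rcases mul_eq_zero.mp h0 with h | h
        · exact absurd (by linarith) hne
        · exact h
      have hv1ne : v1 ≠ 0 := by
        intro h; apply hne
        have h0 : u1 * v2 = 0 := by rw [h] at hsum; linarith
        have hv2z : v2 = 0 := by
          rcases mul_eq_zero.mp h0 with h' | h'
          · exact absurd h' (ne_of_gt hu1)
          · exact h'
        rw [h, hv2z]; ring
      have hc3' := cross3s u1 v1 u2 v2 a b C3pos ha hb hA hc2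
        (mul_ne_zero (mul_ne_zero hv1ne (ne_of_gt hu1)) (sub_ne_zero.mpr hne))
      linarith
    · -- strict c2
      have hs : 0 < (u1^2*v2^2 - u2^2*v1^2)^2 :=
        lt_of_le_of_ne (sq_nonneg _) (Ne.symm (pow_ne_zero 2 (sub_ne_zero.mpr hsq)))
      have hc2' : a^2*b^2 < u1^2*u2^2 - v1^2*v2^2 := by nlinarith
      linarith


lemma quart_root (A : ℝ) (hA : 0 < A) : ∃ a : ℝ, 0 < a ∧ a^4 = A := by
  refine ⟨A ^ ((1:ℝ)/4), Real.rpow_pos_of_pos hA _, ?_⟩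
  rw [← Real.rpow_natCast (A ^ ((1:ℝ)/4)) 4, ← Real.rpow_mul hA.le]
  norm_num

lemma main_le (u1 v1 u2 v2 t : ℝ) (h1 : |v1| < u1) (h2 : |v2| < u2)
    (hne : (u1, v1) ≠ (u2, v2)) (ht0 : 0 < t) (ht1 : t < 1)
    (hAB : u1^4 - v1^4 ≤ u2^4 - v2^4) :
    u1^4 - v1^4 < ((1-t)*u1 + t*u2)^4 - ((1-t)*v1 + t*v2)^4 := by
  have hu1 : 0 < u1 := lt_of_le_of_lt (abs_nonneg v1) h1
  have hu2 : 0 < u2 := lt_of_le_of_lt (abs_nonneg v2) h2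
  have hv1 : v1^2 < u1^2 := by obtain ⟨x, y⟩ := abs_lt.mp h1; nlinarith
  have hv2 : v2^2 < u2^2 := by obtain ⟨x, y⟩ := abs_lt.mp h2; nlinarith
  have hApos : 0 < u1^4 - v1^4 := by nlinarith [sq_nonneg v1, sq_nonneg u1]
  have hBpos : 0 < u2^4 - v2^4 := by nlinarith [sq_nonneg v2, sq_nonneg u2]
  obtain ⟨a, ha, ha4⟩ := quart_root _ hApos
  obtain ⟨b, hb, hb4⟩ := quart_root _ hBpos
  have hs : 0 < 1 - t := by linarith
  -- scaled points
  have h1' : |(1-t)*v1| < (1-t)*u1 := by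
    rw [abs_mul, abs_of_pos hs]; exact (mul_lt_mul_iff_right₀ hs).mpr h1
  have h2' : |t*v2| < t*u2 := by
    rw [abs_mul, abs_of_pos ht0]; exact (mul_lt_mul_iff_right₀ ht0).mpr h2
  have hA' : ((1-t)*a)^4 = ((1-t)*u1)^4 - ((1-t)*v1)^4 := by
    rw [mul_pow, mul_pow, mul_pow, ha4]; ring
  have hB' : (t*b)^4 = (t*u2)^4 - (t*v2)^4 := by
    rw [mul_pow, mul_pow, mul_pow, hb4]; ring
  obtain ⟨hle, hstrict⟩ := superadd _ _ _ _ _ _ h1' h2'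
    (mul_pos hs ha) (mul_pos ht0 hb) hA' hB'
  have hab : a ≤ b := le_of_pow_le_pow_left₀ (by norm_num : (4:ℕ) ≠ 0) hb.le (by rw [ha4, hb4]; exact hAB)
  by_cases hp : u1*v2 = u2*v1
  · -- proportional: b > a strictly
    have hab' : a < b := by
      rcases lt_or_eq_of_le hab with h | h
      · exact h
      · exfalso
        -- a = b forces points equal
        have hAB' : u1^4 - v1^4 = u2^4 - v2^4 := by rw [← ha4, ← hb4, h]
        have hfac : (u1^4 - u2^4) * (u1^4 - v1^4) = 0 := by
          linear_combination u1^4 * hAB' - ((u1*v2)^3 + (u1*v2)^2*(u2*v1) + (u1*v2)*(u2*v1)^2 + (u2*v1)^3) * hp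
        have hu14 : u1^4 = u2^4 := by
          rcases mul_eq_zero.mp hfac with h' | h'
          · linarith
          · exact absurd h' (by linarith)
        have hu : u1 = u2 :=
          le_antisymm (le_of_pow_le_pow_left₀ (by norm_num : (4:ℕ) ≠ 0) hu2.le hu14.le)
            (le_of_pow_le_pow_left₀ (by norm_num : (4:ℕ) ≠ 0) hu1.le hu14.ge)
        have hv : v1 = v2 := by
          have : u1 * v2 = u1 * v1 := by rw [hp, hu]
          exact (mul_left_cancel₀ (ne_of_gt hu1) this).symm
        exact hne (by rw [hu, hv])
    have harg : a < (1-t)*a + t*b := by nlinarith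
    have hlt : a^4 < ((1-t)*a + t*b)^4 := pow_lt_pow_left₀ harg ha.le (by norm_num)
    calc u1^4 - v1^4 = a^4 := ha4.symm
      _ < ((1-t)*a + t*b)^4 := hlt
      _ ≤ ((1-t)*u1 + t*u2)^4 - ((1-t)*v1 + t*v2)^4 := hle
  · have hp' : ((1-t)*u1)*(t*v2) ≠ (t*u2)*((1-t)*v1) := by
      intro h; apply hp
      have hst : (1-t)*t ≠ 0 := by positivity
      apply mul_left_cancel₀ hst; linear_combination h
    have hstrict' := hstrict hp'
    have harg : a ≤ (1-t)*a + t*b := by nlinarith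
    have hle2 : a^4 ≤ ((1-t)*a + t*b)^4 := pow_le_pow_left₀ ha.le harg 4
    calc u1^4 - v1^4 = a^4 := ha4.symm
      _ ≤ ((1-t)*a + t*b)^4 := hle2
      _ < ((1-t)*u1 + t*u2)^4 - ((1-t)*v1 + t*v2)^4 := hstrict'


lemma main_uv (u1 v1 u2 v2 t : ℝ) (h1 : |v1| < u1) (h2 : |v2| < u2)
    (hne : (u1, v1) ≠ (u2, v2)) (ht0 : 0 < t) (ht1 : t < 1) :
    min (u1^4 - v1^4) (u2^4 - v2^4) < ((1-t)*u1 + t*u2)^4 - ((1-t)*v1 + t*v2)^4 := by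
  rcases le_total (u1^4 - v1^4) (u2^4 - v2^4) with h | h
  · calc min (u1^4 - v1^4) (u2^4 - v2^4) ≤ u1^4 - v1^4 := min_le_left _ _
      _ < _ := main_le u1 v1 u2 v2 t h1 h2 hne ht0 ht1 h
  · have key := main_le u2 v2 u1 v1 (1-t) h2 h1 (Ne.symm hne) (by linarith) (by linarith) h
    calc min (u1^4 - v1^4) (u2^4 - v2^4) ≤ u2^4 - v2^4 := min_le_right _ _
      _ < ((1-(1-t))*u2 + (1-t)*u1)^4 - ((1-(1-t))*v2 + (1-t)*v1)^4 := key
      _ = ((1-t)*u1 + t*u2)^4 - ((1-t)*v1 + t*v2)^4 := by ring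

open Set in
lemma part1 :
    (∀ x ∈ {p : ℝ × ℝ | 0 < p.1 ∧ 0 < p.2},
     ∀ y ∈ {p : ℝ × ℝ | 0 < p.1 ∧ 0 < p.2}, x ≠ y → ∀ t ∈ Ioo (0:ℝ) 1,
        min (x.1 ^ 3 * x.2 + x.1 * x.2 ^ 3) (y.1 ^ 3 * y.2 + y.1 * y.2 ^ 3) <
          ((1 - t) • x + t • y).1 ^ 3 * ((1 - t) • x + t • y).2 +
            ((1 - t) • x + t • y).1 * ((1 - t) • x + t • y).2 ^ 3) := by
  rintro x ⟨hx1, hx2⟩ y ⟨hy1, hy2⟩ hxy t ⟨ht0, ht1⟩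
  have h1 : |x.1 - x.2| < x.1 + x.2 := abs_lt.mpr ⟨by linarith, by linarith⟩
  have h2 : |y.1 - y.2| < y.1 + y.2 := abs_lt.mpr ⟨by linarith, by linarith⟩
  have hne : ((x.1 + x.2 : ℝ), (x.1 - x.2 : ℝ)) ≠ (y.1 + y.2, y.1 - y.2) := by
    intro h
    rw [Prod.mk.injEq] at h
    exact hxy (Prod.ext (by linarith [h.1, h.2]) (by linarith [h.1, h.2]))
  have key := main_uv (x.1+x.2) (x.1-x.2) (y.1+y.2) (y.1-y.2) t h1 h2 hne ht0 ht1
  have hz1 : ((1 - t) • x + t • y).1 = (1-t)*x.1 + t*y.1 := by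
    simp [Prod.smul_fst, Prod.fst_add, smul_eq_mul]
  have hz2 : ((1 - t) • x + t • y).2 = (1-t)*x.2 + t*y.2 := by
    simp [Prod.smul_snd, Prod.snd_add, smul_eq_mul]
  rw [hz1, hz2]
  have e1 : (x.1+x.2)^4 - (x.1-x.2)^4 = 8*(x.1^3*x.2 + x.1*x.2^3) := by ring
  have e2 : (y.1+y.2)^4 - (y.1-y.2)^4 = 8*(y.1^3*y.2 + y.1*y.2^3) := by ring
  have e3 : ((1-t)*(x.1+x.2) + t*(y.1+y.2))^4 - ((1-t)*(x.1-x.2) + t*(y.1-y.2))^4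
      = 8*(((1-t)*x.1 + t*y.1)^3*((1-t)*x.2 + t*y.2)
          + ((1-t)*x.1 + t*y.1)*((1-t)*x.2 + t*y.2)^3) := by ring
  rcases min_lt_iff.mp key with h | h
  · apply lt_of_le_of_lt (min_le_left _ _)
    linarith
  · apply lt_of_le_of_lt (min_le_right _ _)
    linarith


noncomputable def LL (x : ℝ × ℝ) : ℝ × ℝ →L[ℝ] ℝ :=
  (3*(x.1*x.1*x.2) + x.2*x.2*x.2) • ContinuousLinearMap.fst ℝ ℝ ℝ
    + (x.1*x.1*x.1 + 3*(x.2*x.2*x.1)) • ContinuousLinearMap.snd ℝ ℝ ℝ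

lemma hasF (x : ℝ × ℝ) :
    HasFDerivAt (fun p : ℝ × ℝ => p.1 ^ 3 * p.2 + p.1 * p.2 ^ 3) (LL x) x := by
  have hfun : (fun p : ℝ × ℝ => p.1 ^ 3 * p.2 + p.1 * p.2 ^ 3)
      = (fun p : ℝ × ℝ => p.1*p.1*p.1*p.2 + p.1*(p.2*p.2*p.2)) := by
    funext p; ring
  rw [hfun]
  have h1 : HasFDerivAt (fun p : ℝ × ℝ => p.1) (ContinuousLinearMap.fst ℝ ℝ ℝ) x :=
    hasFDerivAt_fst
  have h2 : HasFDerivAt (fun p : ℝ × ℝ => p.2) (ContinuousLinearMap.snd ℝ ℝ ℝ) x :=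
    hasFDerivAt_snd
  have := (((h1.mul h1).mul h1).mul h2).add (h1.mul ((h2.mul h2).mul h2))
  simp only [Pi.mul_def, Pi.add_def] at this
  refine this.congr_fderiv ?_
  ext v
  · simp [LL, ContinuousLinearMap.smul_apply]
    ring
  · simp [LL]
    ring

lemma fderivF_eq : fderiv ℝ (fun p : ℝ × ℝ => p.1 ^ 3 * p.2 + p.1 * p.2 ^ 3) = LL :=
  funext fun x => (hasF x).fderiv

lemma part2 : fderiv ℝ (fun p : ℝ × ℝ => p.1 ^ 3 * p.2 + p.1 * p.2 ^ 3) (1, 1) (1, -1) = 0 := by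
  rw [fderivF_eq]
  simp [LL]
  norm_num

lemma part3 : fderiv ℝ (fderiv ℝ (fun p : ℝ × ℝ => p.1 ^ 3 * p.2 + p.1 * p.2 ^ 3)) (1, 1)
    (1, -1) (1, -1) = 0 := by
  rw [fderivF_eq]
  have h1 : HasFDerivAt (fun p : ℝ × ℝ => p.1) (ContinuousLinearMap.fst ℝ ℝ ℝ) ((1:ℝ),(1:ℝ)) :=
    hasFDerivAt_fst
  have h2 : HasFDerivAt (fun p : ℝ × ℝ => p.2) (ContinuousLinearMap.snd ℝ ℝ ℝ) ((1:ℝ),(1:ℝ)) :=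
    hasFDerivAt_snd
  have hc1 := (((h1.mul h1).mul h2).const_mul (3:ℝ)).add ((h2.mul h2).mul h2)
  have hc2 := ((h1.mul h1).mul h1).add (((h2.mul h2).mul h1).const_mul (3:ℝ))
  have H := (hc1.smul_const (ContinuousLinearMap.fst ℝ ℝ ℝ)).add
    (hc2.smul_const (ContinuousLinearMap.snd ℝ ℝ ℝ))
  have H' : HasFDerivAt LL _ ((1:ℝ),(1:ℝ)) := H
  rw [H'.fderiv]
  simp [ContinuousLinearMap.smul_apply, ContinuousLinearMap.add_apply,
    ContinuousLinearMap.smulRight_apply, ContinuousLinearMap.coe_fst',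
    ContinuousLinearMap.coe_snd', smul_eq_mul]
  norm_num


open Set

theorem stmt_7 :
    (∀ x ∈ {p : ℝ × ℝ | 0 < p.1 ∧ 0 < p.2},
     ∀ y ∈ {p : ℝ × ℝ | 0 < p.1 ∧ 0 < p.2}, x ≠ y → ∀ t ∈ Ioo (0:ℝ) 1,
        min (x.1 ^ 3 * x.2 + x.1 * x.2 ^ 3) (y.1 ^ 3 * y.2 + y.1 * y.2 ^ 3) <
          ((1 - t) • x + t • y).1 ^ 3 * ((1 - t) • x + t • y).2 +
            ((1 - t) • x + t • y).1 * ((1 - t) • x + t • y).2 ^ 3) ∧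
    fderiv ℝ (fun p : ℝ × ℝ => p.1 ^ 3 * p.2 + p.1 * p.2 ^ 3) (1, 1) (1, -1) = 0 ∧
    fderiv ℝ (fderiv ℝ (fun p : ℝ × ℝ => p.1 ^ 3 * p.2 + p.1 * p.2 ^ 3)) (1, 1)
        (1, -1) (1, -1) = 0 := by
  exact ⟨part1, part2, part3⟩
end

section
/- Let $f(x_1,x_2)=x_2$ for $x_2\le 0$ and $f(x_1,x_2)=\frac{x_2}{1-x_1x_2}$ for $x_2>0$; let $g(x_1,x_2)=(0,1)$ for $x_2\le 0$ and $g(x_1,x_2)=(x_2^2/\sqrt{1+x_2^4},\,1/\sqrt{1+x_2^4})$ for $x_2>0$; let $\lambda(x_1,x_2)=1$ for $x_2\le 0$ and $\lambda(x_1,x_2)=\sqrt{1+x_2^4}/(1-x_1x_2)^2$ for $x_2>0$. Then on a neighborhood of the origin where $x_1x_2<1$, $\lambda$ is positive and continuous and $\nabla f(x)=\lambda(x)g(x)$ for all $x$. -/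
open Set Asymptotics Topology Filter

private lemma bdry_case (x : ℝ × ℝ) (hx1 : |x.1| < 1) (hx2 : x.2 = 0) :
    HasFDerivAt (fun p : ℝ × ℝ => if p.2 ≤ 0 then p.2 else p.2 / (1 - p.1 * p.2))
      (ContinuousLinearMap.snd ℝ ℝ ℝ) x := by
  rw [hasFDerivAt_iff_isLittleO_nhds_zero]
  rw [Asymptotics.isLittleO_iff]
  intro c hc
  have hA : ∀ᶠ h : ℝ × ℝ in 𝓝 0, |(x + h).1| < 1 := by
    have : ContinuousAt (fun h : ℝ × ℝ => |(x + h).1|) 0 := by fun_prop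
    have h0 : |(x + (0:ℝ×ℝ)).1| < 1 := by simpa using hx1
    exact this.eventually_lt continuousAt_const h0
  have hB : ∀ᶠ h : ℝ × ℝ in 𝓝 0, |(x + h).2| < min (1/2) (c/2) := by
    have : ContinuousAt (fun h : ℝ × ℝ => |(x + h).2|) 0 := by fun_prop
    have h0 : |(x + (0:ℝ×ℝ)).2| < min (1/2) (c/2) := by
      simp [hx2]
      positivity
    exact this.eventually_lt continuousAt_const h0
  filter_upwards [hA, hB] with h h1 h2
  set p := x + h with hp
  have hph : p.2 = x.2 + h.2 := rfl
  have hsnd : |h.2| ≤ ‖h‖ := by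
    simpa [Real.norm_eq_abs] using norm_snd_le h
  have hifx : (if x.2 ≤ 0 then x.2 else x.2 / (1 - x.1 * x.2)) = x.2 := by simp [hx2]
  by_cases hple : p.2 ≤ 0
  · simp only [hple, if_pos, hifx, hx2]
    simp [hph, hx2]
    positivity
  · push_neg at hple
    rw [if_neg hple.not_ge, hifx, hx2]
    have hp2 : p.2 = h.2 := by rw [hph, hx2]; ring
    have h2' : |p.2| < min (1/2) (c/2) := h2
    have hd : (1:ℝ)/2 < 1 - p.1 * p.2 := by
      have := abs_lt.mp h1
      have h2a := (abs_lt.mp (lt_of_lt_of_le h2' (min_le_left _ _)))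
      nlinarith
    have key : p.2 / (1 - p.1 * p.2) - 0 - (ContinuousLinearMap.snd ℝ ℝ ℝ) h
        = p.1 * p.2 ^ 2 / (1 - p.1 * p.2) := by
      have hsa : (ContinuousLinearMap.snd ℝ ℝ ℝ) h = h.2 := rfl
      rw [hsa, ← hp2]
      have hne : (1:ℝ) - p.1 * p.2 ≠ 0 := (by linarith : (0:ℝ) < 1 - p.1 * p.2).ne'
      rw [eq_div_iff hne, sub_mul, sub_mul, div_mul_cancel₀ _ hne]
      ring
    rw [key, Real.norm_eq_abs, abs_div, abs_of_pos (by linarith : (0:ℝ) < 1 - p.1*p.2)]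
    have hnum : |p.1 * p.2 ^ 2| ≤ p.2 ^ 2 := by
      rw [abs_mul, abs_pow]
      nlinarith [abs_nonneg p.1, sq_nonneg p.2, abs_lt.mp h1, sq_abs p.2]
    have hstep : |p.1 * p.2 ^ 2| / (1 - p.1 * p.2) ≤ 2 * p.2 ^ 2 := by
      rw [div_le_iff₀ (by linarith)]
      nlinarith [sq_nonneg p.2]
    refine hstep.trans ?_
    have hc2 : |p.2| ≤ c/2 := le_of_lt (lt_of_lt_of_le h2' (min_le_right _ _))
    have h2c : 2 * p.2 ^ 2 ≤ c * |p.2| := by nlinarith [abs_nonneg p.2, sq_abs p.2]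
    refine h2c.trans ?_
    have hfin : |p.2| ≤ ‖h‖ := by rw [hp2]; exact hsnd
    nlinarith [norm_nonneg h]

private lemma pos_case (x : ℝ × ℝ) (hx : 1 - x.1 * x.2 ≠ 0) (v : ℝ × ℝ) :
    fderiv ℝ (fun p : ℝ × ℝ => p.2 * (1 - p.1 * p.2)⁻¹) x v =
      (x.2^2 * v.1 + v.2) / (1 - x.1 * x.2)^2 := by
  have h1 : HasFDerivAt (fun p : ℝ × ℝ => p.2) (ContinuousLinearMap.snd ℝ ℝ ℝ) x := hasFDerivAt_snd
  have h2 : HasFDerivAt (fun p : ℝ × ℝ => 1 - p.1 * p.2)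
      ((0:(ℝ×ℝ) →L[ℝ] ℝ) - (x.1 • ContinuousLinearMap.snd ℝ ℝ ℝ +
        (ContinuousLinearMap.fst ℝ ℝ ℝ).smulRight x.2)) x :=
    (hasFDerivAt_const 1 x).sub (hasFDerivAt_fst.mul' hasFDerivAt_snd)
  have h3 := (hasFDerivAt_inv hx).comp x h2
  have h4 := h1.mul' h3
  simp only [Function.comp_def, Pi.mul_def] at h4
  rw [h4.fderiv]
  simp [ContinuousLinearMap.smulRight_apply]
  field_simp
  ring

theorem stmt_11 :
    ∃ V : Set (ℝ × ℝ), IsOpen V ∧ ((0:ℝ), (0:ℝ)) ∈ V ∧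
      (∀ p ∈ V, p.1 * p.2 < 1) ∧
      ContinuousOn (fun p : ℝ × ℝ =>
          if p.2 ≤ 0 then (1:ℝ)
          else Real.sqrt (1 + p.2 ^ 4) / (1 - p.1 * p.2) ^ 2) V ∧
      (∀ p ∈ V, 0 < (if p.2 ≤ 0 then (1:ℝ)
          else Real.sqrt (1 + p.2 ^ 4) / (1 - p.1 * p.2) ^ 2)) ∧
      (∀ x ∈ V, ∀ v : ℝ × ℝ,
        fderiv ℝ (fun p : ℝ × ℝ => if p.2 ≤ 0 then p.2 else p.2 / (1 - p.1 * p.2)) x v =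
          (if x.2 ≤ 0 then (1:ℝ) else Real.sqrt (1 + x.2 ^ 4) / (1 - x.1 * x.2) ^ 2) *
            ((if x.2 ≤ 0 then ((0:ℝ), (1:ℝ))
              else (x.2 ^ 2 / Real.sqrt (1 + x.2 ^ 4), 1 / Real.sqrt (1 + x.2 ^ 4))).1 * v.1 +
             (if x.2 ≤ 0 then ((0:ℝ), (1:ℝ))
              else (x.2 ^ 2 / Real.sqrt (1 + x.2 ^ 4), 1 / Real.sqrt (1 + x.2 ^ 4))).2 * v.2)) := by
  refine ⟨Ioo (-1:ℝ) 1 ×ˢ Ioo (-1:ℝ) 1, (isOpen_Ioo).prod isOpen_Ioo, ?_, ?_, ?_, ?_, ?_⟩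
  · constructor <;> constructor <;> norm_num
  · rintro p ⟨⟨ha, hb⟩, hc, hd⟩
    nlinarith
  · -- continuity
    apply ContinuousOn.if
    · rintro a ⟨haV, hfr⟩
      have : a.2 = 0 := by
        have := frontier_le_subset_eq (f := fun a : ℝ × ℝ => a.2)
          (g := fun _ => (0:ℝ)) (by fun_prop) continuous_const hfr
        simpa using this
      simp [this]
    · exact continuousOn_const
    · have hne : ∀ a ∈ (Ioo (-1:ℝ) 1 ×ˢ Ioo (-1:ℝ) 1) ∩ closure {a : ℝ × ℝ | ¬a.2 ≤ 0},
          ((1:ℝ) - a.1 * a.2) ^ 2 ≠ 0 := by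
        rintro a ⟨⟨⟨ha, hb⟩, hc, hd⟩, -⟩
        have h' : a.1 * a.2 < 1 := by nlinarith
        have h0 : (0:ℝ) < 1 - a.1 * a.2 := by linarith
        positivity
      exact ((Real.continuous_sqrt.comp (by fun_prop)).continuousOn).div
        (by fun_prop) hne
  · rintro p ⟨⟨ha, hb⟩, hc, hd⟩
    by_cases h : p.2 ≤ 0
    · simp [h]
    · rw [if_neg h]
      have h1 : (0:ℝ) < Real.sqrt (1 + p.2 ^ 4) := Real.sqrt_pos.mpr (by positivity)
      have h2 : p.1 * p.2 < 1 := by nlinarith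
      have h0 : (0:ℝ) < 1 - p.1 * p.2 := by linarith
      have : (0:ℝ) < (1 - p.1 * p.2) ^ 2 := by positivity
      positivity
  · rintro x ⟨⟨ha, hb⟩, hc, hd⟩ v
    have hprod : x.1 * x.2 < 1 := by nlinarith
    have hne : (1:ℝ) - x.1 * x.2 ≠ 0 := by nlinarith
    rcases lt_trichotomy x.2 0 with hx2 | hx2 | hx2
    · -- interior negative
      have heq : (fun p : ℝ × ℝ => if p.2 ≤ 0 then p.2 else p.2 / (1 - p.1 * p.2))
          =ᶠ[𝓝 x] fun p : ℝ × ℝ => p.2 := by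
        filter_upwards [(isOpen_lt continuous_snd continuous_const).mem_nhds
          (show x ∈ {p : ℝ × ℝ | p.2 < 0} from hx2)] with p hp
        simp [le_of_lt hp]
      rw [heq.fderiv_eq, hasFDerivAt_snd.fderiv]
      simp [hx2.le]
    · -- boundary
      have hx1 : |x.1| < 1 := abs_lt.mpr ⟨ha, hb⟩
      rw [(bdry_case x hx1 hx2).fderiv]
      simp [hx2]
    · -- interior positive
      have heq : (fun p : ℝ × ℝ => if p.2 ≤ 0 then p.2 else p.2 / (1 - p.1 * p.2))
          =ᶠ[𝓝 x] fun p : ℝ × ℝ => p.2 * (1 - p.1 * p.2)⁻¹ := by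
        filter_upwards [(isOpen_lt continuous_const continuous_snd).mem_nhds
          (show x ∈ {p : ℝ × ℝ | 0 < p.2} from hx2)] with p hp
        rw [if_neg (not_le.mpr hp), div_eq_mul_inv]
      rw [heq.fderiv_eq, pos_case x hne v]
      rw [if_neg (not_le.mpr hx2), if_neg (not_le.mpr hx2)]
      have hs : Real.sqrt (1 + x.2 ^ 4) ≠ 0 := ne_of_gt (Real.sqrt_pos.mpr (by positivity))
      field_simp
end

section
/- Let $g:\mathbb{R}^2\to\mathbb{R}^2$ be Debreu's vector field: $g(x)=(0,1)$ if $x_2\le 0$ and $g(x)=(x_2^2/\sqrt{1+x_2^4},\,1/\sqrt{1+x_2^4})$ if $x_2>0$. Then there is no open neighborhood $V$ of the origin, no $C^2$ function $h:V\to\mathbb{R}$, and no positive $C^1$ function $\mu:V\to\mathbb{R}$ such that $\nabla h(x)=\mu(x)g(x)$ for all $x\in V$. -/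
open Set

lemma debreu_const_of_deriv_zero {f : ℝ → ℝ} {a b : ℝ} (hab : a ≤ b)
    (hf : ∀ x ∈ Icc a b, HasDerivAt f 0 x) : f b = f a := by
  have h2 := Convex.norm_image_sub_le_of_norm_hasDerivWithin_le
    (C := 0) (f' := fun _ => (0:ℝ)) (fun x hx => (hf x hx).hasDerivWithinAt)
    (fun x _ => by simp) (convex_Icc a b) (left_mem_Icc.mpr hab) (right_mem_Icc.mpr hab)
  simpa [sub_eq_zero] using h2

lemma debreu_left_limit_zero {f : ℝ → ℝ} {δ : ℝ} (hδ : 0 < δ)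
    (hf : ContinuousAt f 0) (h0 : ∀ s ∈ Ioo (-δ) (0:ℝ), f s = 0) : f 0 = 0 := by
  have hne : (nhdsWithin (0:ℝ) (Ioo (-δ) 0)).NeBot := by
    refine mem_closure_iff_nhdsWithin_neBot.mp ?_
    rw [closure_Ioo (by linarith : -δ ≠ 0)]
    exact right_mem_Icc.mpr (by linarith)
  have h1 : Filter.Tendsto f (nhdsWithin (0:ℝ) (Ioo (-δ) 0)) (nhds (f 0)) :=
    hf.continuousWithinAt.tendsto
  have h2 : Filter.Tendsto f (nhdsWithin (0:ℝ) (Ioo (-δ) 0)) (nhds 0) := by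
    refine Filter.Tendsto.congr' ?_ tendsto_const_nhds
    exact eventually_nhdsWithin_of_forall fun s hs => (h0 s hs).symm
  exact tendsto_nhds_unique h1 h2

set_option maxHeartbeats 1000000 in
theorem stmt_13 :
    ¬ ∃ (V : Set (ℝ × ℝ)) (h : ℝ × ℝ → ℝ) (μ : ℝ × ℝ → ℝ),
      IsOpen V ∧ ((0:ℝ), (0:ℝ)) ∈ V ∧
      ContDiffOn ℝ 2 h V ∧ ContDiffOn ℝ 1 μ V ∧ (∀ x ∈ V, 0 < μ x) ∧
      ∀ x ∈ V, ∀ v : ℝ × ℝ,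
        fderiv ℝ h x v =
          μ x * ((if x.2 ≤ 0 then ((0:ℝ), (1:ℝ))
                  else (x.2 ^ 2 / Real.sqrt (1 + x.2 ^ 4),
                        1 / Real.sqrt (1 + x.2 ^ 4))).1 * v.1 +
                 (if x.2 ≤ 0 then ((0:ℝ), (1:ℝ))
                  else (x.2 ^ 2 / Real.sqrt (1 + x.2 ^ 4),
                        1 / Real.sqrt (1 + x.2 ^ 4))).2 * v.2) := by
  rintro ⟨V, h, μ, hV, h0V, hh, hμ, hμpos, hgrad⟩
  -- differentiability of h on V
  have hdiff : ∀ x ∈ V, HasFDerivAt h (fderiv ℝ h x) x := fun x hx =>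
    ((hh.differentiableOn (by norm_num)).differentiableAt (hV.mem_nhds hx)).hasFDerivAt
  -- continuity of μ at the origin, lower bound m on a ball
  set m : ℝ := μ (0,0) / 2 with hm_def
  have hm : 0 < m := by
    have := hμpos _ h0V
    simp only [hm_def]; linarith
  have hμcont : ContinuousAt μ ((0:ℝ),(0:ℝ)) :=
    hμ.continuousOn.continuousAt (hV.mem_nhds h0V)
  have hpre : μ ⁻¹' Ioi m ∈ nhds (((0:ℝ),(0:ℝ)) : ℝ × ℝ) := by
    refine hμcont (Ioi_mem_nhds ?_)
    have := hμpos _ h0V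
    simp only [hm_def]; linarith
  obtain ⟨r1, hr1pos, hr1⟩ := Metric.mem_nhds_iff.mp hpre
  obtain ⟨r0, hr0pos, hr0⟩ := Metric.isOpen_iff.mp hV _ h0V
  set r : ℝ := min r1 (min r0 1) with hr_def
  have hrpos : 0 < r := by
    simp only [hr_def]; positivity
  have hr1' : r ≤ r1 := min_le_left _ _
  have hr0' : r ≤ r0 := le_trans (min_le_right _ _) (min_le_left _ _)
  have hrle1 : r ≤ 1 := le_trans (min_le_right _ _) (min_le_right _ _)
  -- membership helper
  have memball : ∀ x1 x2 : ℝ, |x1| < r → |x2| < r → ((x1, x2) : ℝ × ℝ) ∈ Metric.ball (((0:ℝ),(0:ℝ)) : ℝ × ℝ) r := by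
    intro x1 x2 h1 h2
    rw [Metric.mem_ball, Prod.dist_eq]
    simp only [Real.dist_eq, sub_zero]
    exact max_lt h1 h2
  have memV : ∀ x1 x2 : ℝ, |x1| < r → |x2| < r → ((x1, x2) : ℝ × ℝ) ∈ V := by
    intro x1 x2 h1 h2
    exact hr0 (Metric.ball_subset_ball hr0' (memball x1 x2 h1 h2))
  have memμ : ∀ x1 x2 : ℝ, |x1| < r → |x2| < r → m < μ (x1, x2) := by
    intro x1 x2 h1 h2
    exact hr1 (Metric.ball_subset_ball hr1' (memball x1 x2 h1 h2))
  set a : ℝ := r/2 with ha_def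
  have hapos : 0 < a := by simp only [ha_def]; positivity
  have har : a < r := by simp only [ha_def]; linarith
  -- pointwise gradient evaluations
  have key_le : ∀ x1 x2 : ℝ, ((x1, x2) : ℝ × ℝ) ∈ V → x2 ≤ 0 →
      fderiv ℝ h (x1, x2) (1, 0) = 0 := by
    intro x1 x2 hx hx2
    rw [hgrad _ hx]
    simp [hx2]
  have key_pos : ∀ x1 x2 : ℝ, ((x1, x2) : ℝ × ℝ) ∈ V → 0 < x2 →
      fderiv ℝ h (x1, x2) ((1 : ℝ), -(x2^2)) = 0 := by
    intro x1 x2 hx hx2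
    rw [hgrad _ hx]
    simp only [not_le.mpr hx2, if_false]
    ring
  have key_vert : ∀ x1 x2 : ℝ, ((x1, x2) : ℝ × ℝ) ∈ V → 0 < x2 →
      fderiv ℝ h (x1, x2) ((0 : ℝ), (1 : ℝ)) = μ (x1, x2) / Real.sqrt (1 + x2^4) := by
    intro x1 x2 hx hx2
    rw [hgrad _ hx]
    simp only [not_le.mpr hx2, if_false]
    ring
  -- h is constant horizontally in the region x2 ≤ 0
  have horiz : ∀ t : ℝ, |t| < r → t ≤ 0 → h (a, t) = h (0, t) := by
    intro t htr ht0
    refine debreu_const_of_deriv_zero (f := fun s => h (s, t)) (le_of_lt hapos) ?_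
    intro s hs
    obtain ⟨hs0, hsa⟩ := hs
    have hsr : |s| < r := by rw [abs_lt]; constructor <;> linarith
    have hmem : ((s, t) : ℝ × ℝ) ∈ V := memV _ _ hsr htr
    have hc : HasDerivAt (fun s : ℝ => ((s, t) : ℝ × ℝ)) ((1 : ℝ), (0 : ℝ)) s :=
      (hasDerivAt_id s).prodMk (hasDerivAt_const s t)
    have hD := (hdiff _ hmem).comp_hasDerivAt s hc
    rw [key_le s t hmem ht0] at hD
    exact hD
  -- h is constant along the hyperbolae s ↦ (s, ε/(1+εs))
  have hyper : ∀ ε : ℝ, 0 < ε → ε < r → h (a, ε/(1+ε*a)) = h (0, ε) := by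
    intro ε hε hεr
    have key := debreu_const_of_deriv_zero (f := fun s => h (s, ε/(1+ε*s)))
      (le_of_lt hapos) ?_
    · have e0 : ε/(1+ε*0) = ε := by norm_num
      simpa [e0] using key
    intro s hs
    obtain ⟨hs0, hsa⟩ := hs
    have hden : (0:ℝ) < 1 + ε * s := by nlinarith only [mul_nonneg hε.le hs0]
    have hypos : 0 < ε/(1+ε*s) := div_pos hε hden
    have hyle : ε/(1+ε*s) ≤ ε := by
      rw [div_le_iff₀ hden]
      nlinarith only [mul_nonneg (mul_nonneg hε.le hε.le) hs0, hε]
    have hyr : |ε/(1+ε*s)| < r := by rw [abs_of_pos hypos]; linarith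
    have hsr : |s| < r := by rw [abs_lt]; constructor <;> linarith
    have hmem : ((s, ε/(1+ε*s)) : ℝ × ℝ) ∈ V := memV _ _ hsr hyr
    have hyd : HasDerivAt (fun s : ℝ => ε/(1+ε*s)) (-((ε/(1+ε*s))^2)) s := by
      have h1 : HasDerivAt (fun s : ℝ => 1+ε*s) ε s := by
        simpa using ((hasDerivAt_id s).const_mul ε).const_add 1
      have h2 := (hasDerivAt_const s ε).div h1 (ne_of_gt hden)
      refine h2.congr_deriv ?_
      rw [div_pow]; ring
    have hc : HasDerivAt (fun s : ℝ => ((s, ε/(1+ε*s)) : ℝ × ℝ))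
        ((1 : ℝ), -((ε/(1+ε*s))^2)) s := (hasDerivAt_id s).prodMk hyd
    have hD := (hdiff _ hmem).comp_hasDerivAt s hc
    rw [key_pos s (ε/(1+ε*s)) hmem hypos] at hD
    exact hD
  -- the one–variable machinery
  set δ : ℝ := r/8 with hδ_def
  have hδpos : 0 < δ := by simp only [hδ_def]; positivity
  have hδr : δ < r := by simp only [hδ_def]; linarith
  set I : Set ℝ := Ioo (-δ) δ with hI_def
  have hIopen : IsOpen I := isOpen_Ioo
  have h0I : (0:ℝ) ∈ I := mem_Ioo.mpr ⟨by linarith, hδpos⟩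
  have hsubI : ∀ s ∈ I, |s| < r := by
    intro s hs
    obtain ⟨h1, h2⟩ := hs
    rw [abs_lt]; constructor <;> linarith
  have hIa : ContDiffOn ℝ 2 (fun s : ℝ => h (a, s)) I := by
    have hin : ContDiff ℝ 2 (fun s : ℝ => ((a, s) : ℝ × ℝ)) := contDiff_const.prodMk contDiff_id
    exact hh.comp hin.contDiffOn fun s hs => memV a s (by rw [abs_of_pos hapos]; exact har) (hsubI s hs)
  have hI0 : ContDiffOn ℝ 2 (fun s : ℝ => h (0, s)) I := by
    have hin : ContDiff ℝ 2 (fun s : ℝ => (((0:ℝ), s) : ℝ × ℝ)) := contDiff_const.prodMk contDiff_id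
    exact hh.comp hin.contDiffOn fun s hs => memV 0 s (by simpa using hrpos) (hsubI s hs)
  set u : ℝ → ℝ := fun s => h (a, s) - h (0, s) with hu_def
  have hu2 : ContDiffOn ℝ 2 u I := hIa.sub hI0
  set v : ℝ → ℝ := deriv u with hv_def
  set w : ℝ → ℝ := deriv v with hw_def
  have hv1 : ContDiffOn ℝ 1 v I := hu2.deriv_of_isOpen hIopen (by norm_num)
  have hw_cont : ContinuousOn w I := hv1.continuousOn_deriv_of_isOpen hIopen (le_refl 1)
  have hu_deriv : ∀ s ∈ I, HasDerivAt u (v s) s := fun s hs =>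
    ((hu2.differentiableOn (by norm_num)).differentiableAt (hIopen.mem_nhds hs)).hasDerivAt
  have hv_deriv : ∀ s ∈ I, HasDerivAt v (w s) s := fun s hs =>
    ((hv1.differentiableOn one_ne_zero).differentiableAt (hIopen.mem_nhds hs)).hasDerivAt
  have hu_cont : ContinuousOn u I := hu2.continuousOn
  have hv_cont : ContinuousOn v I := hv1.continuousOn
  -- u vanishes on the left
  have hu0 : ∀ s ∈ Ioc (-δ) (0:ℝ), u s = 0 := by
    intro s hs
    obtain ⟨h1, h2⟩ := hs
    have hsr : |s| < r := by rw [abs_lt]; constructor <;> linarith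
    simp only [hu_def, sub_eq_zero]
    exact horiz s hsr h2
  have hv0 : ∀ s ∈ Ioo (-δ) (0:ℝ), v s = 0 := by
    intro s hs
    have hev : u =ᶠ[nhds s] (fun _ => (0:ℝ)) := by
      filter_upwards [isOpen_Ioo.mem_nhds hs] with t ht
      exact hu0 t (Ioo_subset_Ioc_self ht)
    rw [hv_def, hev.deriv_eq, deriv_const]
  have hv00 : v 0 = 0 :=
    debreu_left_limit_zero hδpos (hv_cont.continuousAt (hIopen.mem_nhds h0I)) hv0
  have hw0 : ∀ s ∈ Ioo (-δ) (0:ℝ), w s = 0 := by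
    intro s hs
    have hev : v =ᶠ[nhds s] (fun _ => (0:ℝ)) := by
      filter_upwards [isOpen_Ioo.mem_nhds hs] with t ht
      exact hv0 t ht
    rw [hw_def, hev.deriv_eq, deriv_const]
  have hw00 : w 0 = 0 :=
    debreu_left_limit_zero hδpos (hw_cont.continuousAt (hIopen.mem_nhds h0I)) hw0
  -- smallness of w near 0
  have hwc : ContinuousAt w 0 := hw_cont.continuousAt (hIopen.mem_nhds h0I)
  obtain ⟨δ1, hδ1pos, hδ1⟩ := Metric.continuousAt_iff.mp hwc (m*a/4) (by positivity)
  -- choose t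
  set t : ℝ := min (δ/2) (δ1/2) with ht_def
  have htpos : 0 < t := by
    simp only [ht_def, lt_min_iff]; constructor <;> positivity
  have htδ : t < δ := lt_of_le_of_lt (min_le_left _ _) (by linarith)
  have htδ1 : t < δ1 := lt_of_le_of_lt (min_le_right _ _) (by linarith)
  have hwsmall : ∀ s : ℝ, 0 ≤ s → s ≤ t → |w s| < m*a/4 := by
    intro s h1 h2
    have : dist s 0 < δ1 := by
      rw [Real.dist_eq, sub_zero, abs_of_nonneg h1]; linarith
    have := hδ1 this
    rwa [Real.dist_eq, hw00, sub_zero] at this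
  -- the comparison point E
  have ht8' : t < r/8 := hδ_def ▸ htδ
  have ht18 : t < 1/8 := by linarith only [ht8', hrle1]
  have hat : a * t < 1/2 := by
    have ha2 : a ≤ 1/2 := by simp only [ha_def]; linarith only [hrle1]
    nlinarith only [mul_pos hapos (show (0:ℝ) < 1/8 - t by linarith only [ht18]), ha2, hapos]
  have hden : 0 < 1 - a * t := by linarith
  set E : ℝ := t / (1 - a * t) with hE_def
  have hEpos : 0 < E := div_pos htpos hden
  have htE : t < E := by
    rw [hE_def, lt_div_iff₀ hden]
    nlinarith only [mul_pos hapos (mul_pos htpos htpos)]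
  have hEr : E < r := by
    rw [hE_def, div_lt_iff₀ hden]
    nlinarith only [mul_nonneg hrpos.le (show (0:ℝ) ≤ 1/2 - a*t by linarith only [hat]), ht8', hrpos]
  have hEt : E / (1 + E * a) = t := by
    have h2 : 1 + E * a = 1/(1 - a*t) := by
      rw [hE_def]; field_simp [show (1:ℝ) - t * a ≠ 0 by rw [mul_comm]; exact hden.ne']; ring
    rw [h2, hE_def]
    field_simp [show (1:ℝ) - t * a ≠ 0 by rw [mul_comm]; exact hden.ne']
  have hhyp := hyper E hEpos hEr
  rw [hEt] at hhyp
  -- mean value theorem on [t, E] for s ↦ h (0, s)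
  have hH0deriv : ∀ s : ℝ, 0 < s → s < r →
      HasDerivAt (fun s : ℝ => h (0, s)) (fderiv ℝ h ((0:ℝ), s) ((0:ℝ),(1:ℝ))) s := by
    intro s h1 h2
    have hmem : (((0:ℝ), s) : ℝ×ℝ) ∈ V := memV 0 s (by simpa using hrpos)
      (by rw [abs_of_pos h1]; exact h2)
    have hc : HasDerivAt (fun s : ℝ => (((0:ℝ), s) : ℝ × ℝ)) ((0:ℝ),(1:ℝ)) s :=
      (hasDerivAt_const s (0:ℝ)).prodMk (hasDerivAt_id s)
    exact (hdiff _ hmem).comp_hasDerivAt s hc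
  have hH0cont : ContinuousOn (fun s : ℝ => h (0, s)) (Icc t E) := by
    intro s hs
    obtain ⟨h1, h2⟩ := hs
    exact ((hH0deriv s (lt_of_lt_of_le htpos h1) (lt_of_le_of_lt h2 hEr)).continuousAt).continuousWithinAt
  obtain ⟨ξ, hξ, hslope⟩ := exists_hasDerivAt_eq_slope (fun s : ℝ => h (0, s))
    (fun s => fderiv ℝ h ((0:ℝ), s) ((0:ℝ),(1:ℝ))) htE hH0cont
    (fun x hx => hH0deriv x (lt_trans htpos hx.1) (lt_trans hx.2 hEr))
  obtain ⟨hξ1, hξ2⟩ := hξ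
  have hξpos : 0 < ξ := lt_trans htpos hξ1
  have hξr : ξ < r := lt_trans hξ2 hEr
  have hmemξ : (((0:ℝ), ξ) : ℝ×ℝ) ∈ V := memV 0 ξ (by simpa using hrpos)
    (by rw [abs_of_pos hξpos]; exact hξr)
  have hvert := key_vert 0 ξ hmemξ hξpos
  have hsqrt_pos : 0 < Real.sqrt (1 + ξ^4) := Real.sqrt_pos.mpr (by positivity)
  have hsqrt_le : Real.sqrt (1 + ξ^4) ≤ 2 := by
    rw [show (2:ℝ) = Real.sqrt 4 by
      rw [show (4:ℝ) = 2^2 by norm_num, Real.sqrt_sq (by norm_num : (0:ℝ) ≤ 2)]]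
    apply Real.sqrt_le_sqrt
    have hξ1' : ξ ≤ 1 := le_trans hξr.le hrle1
    have hξ4 : ξ^4 ≤ 1 := pow_le_one₀ hξpos.le hξ1'
    linarith
  have hμξ : m < μ (0, ξ) := memμ 0 ξ (by simpa using hrpos)
    (by rw [abs_of_pos hξpos]; exact hξr)
  have hdlow : m/2 ≤ fderiv ℝ h ((0:ℝ), ξ) ((0:ℝ),(1:ℝ)) := by
    rw [hvert, div_le_div_iff₀ (by norm_num) hsqrt_pos]
    nlinarith only [hμξ, hsqrt_le, hm, hsqrt_pos]
  have hEtne : E - t ≠ 0 := ne_of_gt (by linarith)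
  rw [eq_div_iff hEtne] at hslope
  have hueq : u t = h (0, E) - h (0, t) := by
    simp only [hu_def]; rw [hhyp]
  have hEmt : a * t^2 ≤ E - t := by
    rw [hE_def, le_sub_iff_add_le, ← sub_nonneg]
    have heq : t / (1-a*t) - (a*t^2 + t) = (a^2*t^3)/(1-a*t) := by
      field_simp [show (1:ℝ) - t * a ≠ 0 by rw [mul_comm]; exact hden.ne']; ring
    rw [heq]
    exact div_nonneg (by positivity) hden.le
  have hlow : m/2 * (a*t^2) ≤ u t := by
    rw [hueq, ← hslope]
    nlinarith only [hdlow, hEmt, hm, mul_pos hapos (mul_pos htpos htpos), htE]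
  -- upper bound: double mean value theorem
  have hIccI : Icc (0:ℝ) t ⊆ I := fun s hs =>
    mem_Ioo.mpr ⟨by linarith [hs.1], by linarith [hs.2]⟩
  obtain ⟨ξ1, hξ1m, hs1⟩ := exists_hasDerivAt_eq_slope u v htpos
    (hu_cont.mono hIccI) (fun x hx => hu_deriv x (hIccI (Ioo_subset_Icc_self hx)))
  have hu00 : u 0 = 0 := hu0 0 ⟨by linarith, le_refl 0⟩
  have hut : u t = v ξ1 * t := by
    rw [hs1, hu00, sub_zero, sub_zero, div_mul_cancel₀ _ htpos.ne']
  have hIccI2 : Icc (0:ℝ) ξ1 ⊆ I := fun s hs =>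
    mem_Ioo.mpr ⟨by linarith [hs.1], by linarith [hs.2, hξ1m.2, htδ]⟩
  obtain ⟨ξ2, hξ2m, hs2⟩ := exists_hasDerivAt_eq_slope v w hξ1m.1
    (hv_cont.mono hIccI2) (fun x hx => hv_deriv x (hIccI2 (Ioo_subset_Icc_self hx)))
  have hv1eq : v ξ1 = w ξ2 * ξ1 := by
    rw [hs2, hv00, sub_zero, sub_zero, div_mul_cancel₀ _ (ne_of_gt hξ1m.1)]
  have hw2 : |w ξ2| < m*a/4 :=
    hwsmall ξ2 hξ2m.1.le (by linarith [hξ2m.2, hξ1m.2])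
  have hwle : w ξ2 < m*a/4 := lt_of_le_of_lt (le_abs_self _) hw2
  have hfinal : u t < m*a/4 * t^2 := by
    rw [hut, hv1eq]
    nlinarith only [hwle, hξ1m.1, hξ1m.2, htpos, mul_pos hm hapos, mul_pos hξ1m.1 htpos,
      mul_pos (mul_pos hm hapos) htpos]
  nlinarith only [hlow, hfinal, mul_pos (mul_pos hm hapos) (mul_pos htpos htpos)]
end
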